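/- arXiv:1309.5693 — 10 statements merged into one kernel-verified Lean document; each statement's English description precedes it below -/
import Mathlib

section
/- For all x > 0, log Γ(x) < (x - 1/2) log x - x + log √(2π) + 1/(12x). -/
open Real Filter Topology

lemma hloga (t : ℝ) (h1 : (0:ℝ) < 1 + t) :
    HasDerivAt (fun t : ℝ => Real.log (1 + t)) (1 / (1 + t)) t := by
  simpa using (((hasDerivAt_id t).const_add 1).log h1.ne')

lemma hlogb (t : ℝ) (h2 : (0:ℝ) < 1 - t) :
    HasDerivAt (fun t : ℝ => Real.log (1 - t)) (-1 / (1 - t)) t := by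
  simpa using (((hasDerivAt_id t).const_sub 1).log h2.ne')

lemma key1 {t : ℝ} (h0 : 0 < t) (h1 : t < 1) :
    2 * t < Real.log (1 + t) - Real.log (1 - t) := by
  set F : ℝ → ℝ := fun t => Real.log (1 + t) - Real.log (1 - t) - 2 * t with hF
  have hderiv : ∀ s ∈ Set.Ico (0:ℝ) 1,
      HasDerivAt F (1 / (1 + s) - (-1 / (1 - s)) - 2) s := by
    intro s hs
    have h1s : (0:ℝ) < 1 + s := by linarith [hs.1]
    have h2s : (0:ℝ) < 1 - s := by linarith [hs.2]
    have hc : HasDerivAt (fun t : ℝ => 2 * t) 2 s := by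
      simpa using (hasDerivAt_id s).const_mul 2
    exact ((hloga s h1s).sub (hlogb s h2s)).sub hc
  have hmono : StrictMonoOn F (Set.Ico (0:ℝ) 1) := by
    apply strictMonoOn_of_deriv_pos (convex_Ico 0 1)
    · intro s hs
      exact ((hderiv s hs).continuousAt).continuousWithinAt
    · intro s hs
      rw [interior_Ico] at hs
      rw [(hderiv s ⟨hs.1.le, hs.2⟩).deriv]
      have h1s : (0:ℝ) < 1 + s := by linarith [hs.1]
      have h2s : (0:ℝ) < 1 - s := by linarith [hs.2]
      have : 1 / (1 + s) - (-1 / (1 - s)) - 2 = 2 * s ^ 2 / ((1 + s) * (1 - s)) := by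
        field_simp; ring
      rw [this]
      exact div_pos (by nlinarith [hs.1]) (by nlinarith)
  have := hmono (Set.mem_Ico.2 ⟨le_refl 0, one_pos⟩) (Set.mem_Ico.2 ⟨h0.le, h1⟩) h0
  simp [hF] at this
  linarith

lemma key2 {t : ℝ} (h0 : 0 < t) (h1 : t < 1) :
    Real.log (1 + t) - Real.log (1 - t) < 2 * t + (2/3) * (t ^ 3 / (1 - t ^ 2)) := by
  set F : ℝ → ℝ := fun t => 2 * t + (2/3) * (t ^ 3 / (1 - t ^ 2))
    - (Real.log (1 + t) - Real.log (1 - t)) with hF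
  have hderiv : ∀ s ∈ Set.Ico (0:ℝ) 1,
      HasDerivAt F (2 + (2/3) * ((3 * s ^ 2 * (1 - s ^ 2) - s ^ 3 * (-(2 * s))) / (1 - s ^ 2) ^ 2)
        - (1 / (1 + s) - (-1 / (1 - s)))) s := by
    intro s hs
    have h1s : (0:ℝ) < 1 + s := by linarith [hs.1]
    have h2s : (0:ℝ) < 1 - s := by linarith [hs.2]
    have hden : (1:ℝ) - s ^ 2 ≠ 0 := by nlinarith
    have hq : HasDerivAt (fun t : ℝ => (2/3) * (t ^ 3 / (1 - t ^ 2)))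
        ((2/3) * ((3 * s ^ 2 * (1 - s ^ 2) - s ^ 3 * (-(2 * s))) / (1 - s ^ 2) ^ 2)) s := by
      have hnum : HasDerivAt (fun t : ℝ => t ^ 3) (3 * s ^ 2) s := by
        simpa using hasDerivAt_pow 3 s
      have hden' : HasDerivAt (fun t : ℝ => 1 - t ^ 2) (-(2 * s)) s := by
        simpa using (hasDerivAt_pow 2 s).const_sub 1
      exact (hnum.div hden' hden).const_mul (2/3 : ℝ)
    have hlin : HasDerivAt (fun t : ℝ => 2 * t) 2 s := by
      simpa using (hasDerivAt_id s).const_mul 2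
    have := (hlin.add hq).sub ((hloga s h1s).sub (hlogb s h2s))
    exact this
  have hmono : StrictMonoOn F (Set.Ico (0:ℝ) 1) := by
    apply strictMonoOn_of_deriv_pos (convex_Ico 0 1)
    · intro s hs
      exact ((hderiv s hs).continuousAt).continuousWithinAt
    · intro s hs
      rw [interior_Ico] at hs
      rw [(hderiv s ⟨hs.1.le, hs.2⟩).deriv]
      have h1s : (0:ℝ) < 1 + s := by linarith [hs.1]
      have h2s : (0:ℝ) < 1 - s := by linarith [hs.2]
      have hden : (0:ℝ) < 1 - s ^ 2 := by nlinarith [hs.1, hs.2]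
      have : 2 + (2/3) * ((3 * s ^ 2 * (1 - s ^ 2) - s ^ 3 * (-(2 * s))) / (1 - s ^ 2) ^ 2)
          - (1 / (1 + s) - (-1 / (1 - s))) = (4/3) * s ^ 4 / (1 - s ^ 2) ^ 2 := by
        have h1s' : (1:ℝ) + s ≠ 0 := h1s.ne'
        have h2s' : (1:ℝ) - s ≠ 0 := h2s.ne'
        have hden' : (1:ℝ) - s ^ 2 ≠ 0 := hden.ne'
        field_simp
        ring
      rw [this]
      exact div_pos (by nlinarith [pow_pos hs.1 4]) (by positivity)
  have := hmono (Set.mem_Ico.2 ⟨le_refl 0, one_pos⟩) (Set.mem_Ico.2 ⟨h0.le, h1⟩) h0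
  simp [hF] at this
  linarith

lemma gB_bounds {y : ℝ} (hy : 0 < y) :
    0 < (y + 1/2) * Real.log (1 + 1/y) - 1 ∧
    (y + 1/2) * Real.log (1 + 1/y) - 1 < 1/(12*y) - 1/(12*(y+1)) := by
  have h2y : (0:ℝ) < 2*y+1 := by linarith
  set t : ℝ := 1/(2*y+1) with ht
  have ht0 : 0 < t := by positivity
  have ht1 : t < 1 := by rw [ht, div_lt_one h2y]; linarith
  have h1mt : (0:ℝ) < 1 - t := by linarith
  have hlog : Real.log (1 + 1/y) = Real.log (1 + t) - Real.log (1 - t) := by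
    rw [← Real.log_div (by linarith) h1mt.ne']
    congr 1
    rw [ht]
    field_simp
    ring
  have hy2 : (0:ℝ) < y + 1/2 := by linarith
  constructor
  · have := mul_lt_mul_of_pos_left (key1 ht0 ht1) hy2
    have he : (y + 1/2) * (2 * t) = 1 := by rw [ht]; field_simp
    rw [hlog]
    nlinarith
  · have := mul_lt_mul_of_pos_left (key2 ht0 ht1) hy2
    have he : (y + 1/2) * (2 * t + (2/3) * (t ^ 3 / (1 - t ^ 2))) - 1
        = 1/(12*y) - 1/(12*(y+1)) := by
      rw [ht]
      have h1 : (1:ℝ) - (1/(2*y+1))^2 = (4*y^2+4*y)/(2*y+1)^2 := by field_simp; ring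
      rw [h1]
      field_simp
      ring
    rw [hlog]
    nlinarith

noncomputable def binet (y : ℝ) : ℝ :=
  Real.log (Real.Gamma y) - ((y - 1/2) * Real.log y - y + Real.log (Real.sqrt (2*Real.pi)))

lemma binet_rec {y : ℝ} (hy : 0 < y) :
    binet y = ((y + 1/2) * Real.log (1 + 1/y) - 1) + binet (y+1) := by
  unfold binet
  rw [show y + 1 = y + 1 by rfl, Real.Gamma_add_one hy.ne',
    Real.log_mul hy.ne' (Real.Gamma_pos_of_pos hy).ne']
  have hlog : Real.log (1 + 1/y) = Real.log (y+1) - Real.log y := by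
    rw [← Real.log_div (by linarith) hy.ne']
    congr 1
    field_simp
  rw [hlog]
  ring

lemma binet_telescope {y : ℝ} (hy : 0 < y) (n : ℕ) :
    binet y ≤ (1/(12*y) - 1/(12*(y+n))) + binet (y+n) := by
  induction n with
  | zero => simp
  | succ n ih =>
    have hyn : (0:ℝ) < y + n := by positivity
    have h1 := binet_rec hyn
    have h2 := (gB_bounds hyn).2
    have harg : y + ((n:ℝ)+1) = (y + n) + 1 := by ring
    push_cast
    rw [harg]
    linarith

lemma binet_nat (n : ℕ) (hn : 1 ≤ n) :
    binet ((n:ℝ)+1) = Real.log (Stirling.stirlingSeq n) - Real.log (Real.sqrt π)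
      - (((n:ℝ)+1/2) * Real.log (1+1/(n:ℝ)) - 1) := by
  have hn0 : (0:ℝ) < (n:ℝ) := by exact_mod_cast hn
  have hlog : Real.log (1 + 1/(n:ℝ)) = Real.log ((n:ℝ)+1) - Real.log n := by
    rw [← Real.log_div (by linarith) hn0.ne']
    congr 1
    field_simp
  unfold binet
  rw [Real.Gamma_nat_eq_factorial, Stirling.log_stirlingSeq_formula,
      Real.log_sqrt (by positivity), Real.log_sqrt pi_pos.le,
      Real.log_mul two_ne_zero pi_ne_zero, Real.log_mul two_ne_zero hn0.ne',
      Real.log_div hn0.ne' (Real.exp_ne_zero 1), Real.log_exp, hlog]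
  ring

lemma tendsto_binet_nat : Tendsto (fun n : ℕ => binet ((n:ℝ)+1)) atTop (𝓝 0) := by
  have h1 : Tendsto (fun n : ℕ => Real.log (Stirling.stirlingSeq n) - Real.log (Real.sqrt π))
      atTop (𝓝 0) := by
    have hs : Real.sqrt π ≠ 0 := by positivity
    have := (Stirling.tendsto_stirlingSeq_sqrt_pi.log hs).sub_const (Real.log (Real.sqrt π))
    simpa using this
  have h2 : Tendsto (fun n : ℕ => ((n:ℝ)+1/2) * Real.log (1+1/(n:ℝ)) - 1) atTop (𝓝 0) := by
    apply tendsto_of_tendsto_of_tendsto_of_le_of_le' tendsto_const_nhds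
      tendsto_one_div_atTop_nhds_zero_nat
    · filter_upwards [eventually_ge_atTop 1] with n hn
      have hn0 : (0:ℝ) < (n:ℝ) := by exact_mod_cast hn
      exact (gB_bounds hn0).1.le
    · filter_upwards [eventually_ge_atTop 1] with n hn
      have hn0 : (0:ℝ) < (n:ℝ) := by exact_mod_cast hn
      have := (gB_bounds hn0).2
      have h12 : 1/(12*(n:ℝ)) - 1/(12*((n:ℝ)+1)) ≤ 1/(n:ℝ) := by
        have : (0:ℝ) < 1/(12*((n:ℝ)+1)) := by positivity
        have h3 : 1/(12*(n:ℝ)) ≤ 1/(n:ℝ) := by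
          apply div_le_div_of_nonneg_left one_pos.le hn0
          linarith
        linarith
      linarith
  have h3 := h1.sub h2
  rw [sub_zero] at h3
  apply h3.congr'
  filter_upwards [eventually_ge_atTop 1] with n hn
  exact (binet_nat n hn).symm

lemma log_one_add_le {u : ℝ} (hu : 0 ≤ u) : Real.log (1 + u) ≤ u := by
  have := Real.log_le_sub_one_of_pos (show (0:ℝ) < 1 + u by linarith)
  linarith

lemma le_log_one_add {u : ℝ} (hu : 0 ≤ u) : u - u ^ 2 ≤ Real.log (1 + u) := by
  have h1u : (0:ℝ) < 1 + u := by linarith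
  have h := Real.log_le_sub_one_of_pos (show (0:ℝ) < (1+u)⁻¹ by positivity)
  rw [Real.log_inv] at h
  have h2 : (1+u)⁻¹ - 1 = -(u/(1+u)) := by field_simp; ring
  rw [h2] at h
  have h3 : u - u ^ 2 ≤ u / (1+u) := by
    rw [le_div_iff₀ h1u]
    nlinarith
  linarith

lemma binet_convex_bound {t : ℝ} (ht0 : 0 ≤ t) (ht1 : t < 1) (m : ℕ) (hm : 1 ≤ m) :
    binet ((m:ℝ) + t) ≤ (1-t) * binet (m:ℝ) + t * binet ((m:ℝ)+1) + 2/(m:ℝ) := by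
  have hm0 : (0:ℝ) < (m:ℝ) := by exact_mod_cast hm
  have hm1 : (1:ℝ) ≤ (m:ℝ) := by exact_mod_cast hm
  have hmt : (0:ℝ) < (m:ℝ) + t := by linarith
  have hc := convexOn_log_Gamma.2 (Set.mem_Ioi.2 hm0)
    (Set.mem_Ioi.2 (show (0:ℝ) < (m:ℝ)+1 by linarith))
    (show (0:ℝ) ≤ 1 - t by linarith) ht0 (by ring)
  simp only [smul_eq_mul, Function.comp_apply] at hc
  rw [show (1-t) * (m:ℝ) + t * ((m:ℝ)+1) = (m:ℝ) + t by ring] at hc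
  -- log expansions
  have e1 : Real.log ((m:ℝ)+1) = Real.log m + Real.log (1 + 1/(m:ℝ)) := by
    rw [← Real.log_mul hm0.ne' (by positivity)]
    congr 1
    field_simp
  have e2 : Real.log ((m:ℝ)+t) = Real.log m + Real.log (1 + t/(m:ℝ)) := by
    rw [← Real.log_mul hm0.ne' (show (1:ℝ) + t/(m:ℝ) ≠ 0 by positivity)]
    congr 1
    field_simp
  have b1 : Real.log (1 + 1/(m:ℝ)) ≤ 1/(m:ℝ) := log_one_add_le (by positivity)
  have b2 : t/(m:ℝ) - (t/(m:ℝ)) ^ 2 ≤ Real.log (1 + t/(m:ℝ)) := le_log_one_add (by positivity)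
  have key : (1-t) * (((m:ℝ) - 1/2) * Real.log (m:ℝ) - (m:ℝ))
      + t * ((((m:ℝ)+1) - 1/2) * Real.log ((m:ℝ)+1) - ((m:ℝ)+1))
      - ((((m:ℝ)+t) - 1/2) * Real.log ((m:ℝ)+t) - ((m:ℝ)+t)) ≤ 2/(m:ℝ) := by
    rw [e1, e2]
    have hE : (1-t) * (((m:ℝ) - 1/2) * Real.log (m:ℝ) - (m:ℝ))
        + t * ((((m:ℝ)+1) - 1/2) * (Real.log (m:ℝ) + Real.log (1 + 1/(m:ℝ))) - ((m:ℝ)+1))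
        - ((((m:ℝ)+t) - 1/2) * (Real.log (m:ℝ) + Real.log (1 + t/(m:ℝ))) - ((m:ℝ)+t))
        = t * ((m:ℝ)+1/2) * Real.log (1 + 1/(m:ℝ))
          - ((m:ℝ)+t-1/2) * Real.log (1 + t/(m:ℝ)) := by ring
    rw [hE]
    have hq1 : t * ((m:ℝ)+1/2) * Real.log (1 + 1/(m:ℝ)) ≤ t * ((m:ℝ)+1/2) * (1/(m:ℝ)) := by
      apply mul_le_mul_of_nonneg_left b1 (by positivity)
    have hq2 : - (((m:ℝ)+t-1/2) * Real.log (1 + t/(m:ℝ)))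
        ≤ - (((m:ℝ)+t-1/2) * (t/(m:ℝ) - (t/(m:ℝ)) ^ 2)) := by
      have h0 : (0:ℝ) ≤ (m:ℝ)+t-1/2 := by linarith
      nlinarith
    have hfin : t * ((m:ℝ)+1/2) * (1/(m:ℝ)) - ((m:ℝ)+t-1/2) * (t/(m:ℝ) - (t/(m:ℝ)) ^ 2)
        ≤ 2/(m:ℝ) := by
      have hL : t * ((m:ℝ)+1/2) * (1/(m:ℝ)) - ((m:ℝ)+t-1/2) * (t/(m:ℝ) - (t/(m:ℝ)) ^ 2)
          = (t*(m:ℝ) + t^3 - t^2/2)/(m:ℝ)^2 := by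
        field_simp
        ring
      rw [hL, div_le_div_iff₀ (by positivity) hm0]
      nlinarith [mul_le_mul_of_nonneg_left hm1 ht0, pow_le_one₀ ht0 ht1.le (n := 3), sq_nonneg t]
    linarith
  unfold binet
  linarith [key, hc]

lemma tendsto_binet_shift (a : ℕ) :
    Tendsto (fun n : ℕ => binet ((a:ℝ) + (n:ℝ) + 1)) atTop (𝓝 0) := by
  have := tendsto_binet_nat.comp (tendsto_add_atTop_nat a)
  apply this.congr
  intro n
  simp only [Function.comp_apply]
  push_cast
  ring_nf

lemma binet_le {x : ℝ} (hx : 0 < x) : binet x ≤ 1/(12*x) := by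
  set t : ℝ := Int.fract x with htdef
  have ht0 : 0 ≤ t := Int.fract_nonneg x
  have ht1 : t < 1 := Int.fract_lt_one x
  set a : ℕ := ⌊x⌋.toNat with hadef
  have hfl : (0:ℤ) ≤ ⌊x⌋ := Int.floor_nonneg.2 hx.le
  have hax : (a:ℝ) + t = x := by
    have : ((a:ℕ):ℝ) = ((⌊x⌋:ℤ):ℝ) := by
      rw [hadef]
      exact_mod_cast congrArg (fun z : ℤ => (z:ℝ)) (Int.toNat_of_nonneg hfl)
    rw [this, htdef]
    exact Int.floor_add_fract x
  set B : ℕ → ℝ := fun n => (1-t) * binet ((a:ℝ) + (n:ℝ) + 1)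
    + t * binet ((a:ℝ) + (n:ℝ) + 1 + 1) + 2/((a:ℝ) + (n:ℝ) + 1) with hBdef
  have hBtend : Tendsto B atTop (𝓝 0) := by
    have h1 : Tendsto (fun n : ℕ => binet ((a:ℝ) + (n:ℝ) + 1)) atTop (𝓝 0) :=
      tendsto_binet_shift a
    have h2 : Tendsto (fun n : ℕ => binet ((a:ℝ) + (n:ℝ) + 1 + 1)) atTop (𝓝 0) := by
      apply (tendsto_binet_shift (a+1)).congr
      intro n
      push_cast
      ring_nf
    have h3 : Tendsto (fun n : ℕ => 2/((a:ℝ) + (n:ℝ) + 1)) atTop (𝓝 0) := by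
      have := (tendsto_const_div_atTop_nhds_zero_nat (2:ℝ)).comp (tendsto_add_atTop_nat (a+1))
      apply this.congr
      intro n
      simp only [Function.comp_apply]
      congr 1
      push_cast
      ring
    have hcomb := ((tendsto_const_nhds (x := (1-t)) (f := atTop)).mul h1).add
      (((tendsto_const_nhds (x := t) (f := atTop)).mul h2).add h3)
    rw [hBdef]
    simpa [add_assoc] using hcomb
  have hsub : ∀ n : ℕ, binet x - 1/(12*x) ≤ B n := by
    intro n
    have htel := binet_telescope hx (n+1)
    have hneg : (0:ℝ) < 1/(12*(x+((n:ℝ)+1))) := by positivity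
    have hm : 1 ≤ a + n + 1 := by omega
    have hcb := binet_convex_bound ht0 ht1 (a + n + 1) hm
    push_cast at hcb
    have harg : (a:ℝ) + (n:ℝ) + 1 + t = x + ((n:ℝ)+1) := by linarith [hax]
    rw [show ((a:ℝ) + (n:ℝ) + 1) + t = (a:ℝ) + (n:ℝ) + 1 + t from rfl, harg] at hcb
    push_cast at htel
    rw [hBdef]
    simp only []
    linarith [htel, hcb, hneg]
  have := ge_of_tendsto' hBtend hsub
  linarith

theorem log_gamma_upper (x : ℝ) (hx : 0 < x) :
    Real.log (Real.Gamma x) <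
      (x - 1 / 2) * Real.log x - x + Real.log (Real.sqrt (2 * π)) + 1 / (12 * x) := by
  have h1 := binet_rec hx
  have h2 := (gB_bounds hx).2
  have h3 := binet_le (show (0:ℝ) < x + 1 by linarith)
  have : binet x < 1/(12*x) := by linarith
  unfold binet at this
  linarith
end

section
/- For all x > 0, log Γ(x) > (x - 1/2) log x - x + log √(2π). -/
open Real

open Filter Topology Nat in
private lemma phi_lt_aux (t : ℝ) (ht : 0 < t) : 2 * t / (2 + t) < Real.log (1 + t) := by
  set F : ℝ → ℝ := fun s => Real.log (1 + s) - 2 * s / (2 + s) with hF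
  have key : StrictMonoOn F (Set.Ici 0) := by
    apply strictMonoOn_of_deriv_pos (convex_Ici 0)
    · apply ContinuousOn.sub
      · exact (Real.continuousOn_log.comp (by fun_prop)
          (fun s hs => by simp at hs ⊢; nlinarith)).congr (fun s hs => rfl)
      · apply ContinuousOn.div (by fun_prop) (by fun_prop)
        intro s hs; simp at hs; nlinarith
    · intro s hs
      rw [interior_Ici] at hs
      simp only [Set.mem_Ioi] at hs
      have h1 : (0:ℝ) < 1 + s := by linarith
      have h2 : (0:ℝ) < 2 + s := by linarith
      have hd : HasDerivAt F (1 / (1 + s) - 4 / (2 + s) ^ 2) s := by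
        have d1 : HasDerivAt (fun u : ℝ => Real.log (1 + u)) (1 / (1 + s)) s := by
          have := (Real.hasDerivAt_log h1.ne').comp s ((hasDerivAt_id s).const_add 1)
          simpa [Function.comp_def] using this
        have d2 : HasDerivAt (fun u : ℝ => 2 * u / (2 + u)) (4 / (2 + s) ^ 2) s := by
          have := ((hasDerivAt_id s).const_mul 2).div ((hasDerivAt_id s).const_add 2) h2.ne'
          refine this.congr_deriv ?_
          simp only [id]
          ring
        exact d1.sub d2
      rw [hd.deriv]
      rw [sub_pos, div_lt_div_iff₀ (by positivity) h1]
      nlinarith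
  have h0 : F 0 < F t := key (Set.mem_Ici.mpr (le_refl 0)) (Set.mem_Ici.mpr ht.le) ht
  simp only [hF] at h0
  norm_num at h0
  linarith

/-- The function whose positivity (above `log √(2π)`) we are proving. -/
noncomputable def gfun (x : ℝ) : ℝ := Real.log (Real.Gamma x) - (x - 1/2) * Real.log x + x

open Filter Topology Nat in
private lemma stirling_log_aux :
    Tendsto (fun n : ℕ => Real.log (n !) - ((n : ℝ) + 1/2) * Real.log n + n) atTop
      (𝓝 (Real.log (Real.sqrt (2 * π)))) := by
  have hπ : (0:ℝ) < π := Real.pi_pos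
  have h2 : Tendsto (fun n => Real.log (Stirling.stirlingSeq n) + 1/2 * Real.log 2) atTop
      (𝓝 (Real.log (Real.sqrt π) + 1/2 * Real.log 2)) := by
    have := ((Real.continuousAt_log (x := Real.sqrt π) (by positivity)).tendsto.comp
      Stirling.tendsto_stirlingSeq_sqrt_pi)
    exact this.add_const _
  have hval : Real.log (Real.sqrt π) + 1/2 * Real.log 2 = Real.log (Real.sqrt (2 * π)) := by
    rw [Real.log_sqrt hπ.le, Real.log_sqrt (by positivity), Real.log_mul (by norm_num) hπ.ne']
    ring
  rw [← hval]
  apply h2.congr'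
  filter_upwards [eventually_ge_atTop 1] with n hn
  have hn0 : (0:ℝ) < n := by exact_mod_cast hn
  rw [Stirling.log_stirlingSeq_formula, Real.log_mul (by norm_num) hn0.ne',
    Real.log_div hn0.ne' (Real.exp_ne_zero 1), Real.log_exp]
  ring

open Filter Topology Nat in
private lemma lemA_aux (x c : ℝ) :
    Tendsto (fun n : ℕ => ((n : ℝ) + c) * Real.log (1 + x / n)) atTop (𝓝 x) := by
  have hreal : Tendsto (fun y : ℝ => (y + c) * Real.log (1 + x / y)) atTop (𝓝 x) := by
    have h1 : Tendsto (fun y : ℝ => 1 + c / y) atTop (𝓝 1) := by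
      simpa using (tendsto_const_nhds (x := (1:ℝ)) (f := atTop)).add
        (tendsto_const_nhds.div_atTop tendsto_id)
    have h2 := Real.tendsto_mul_log_one_add_div_atTop x
    have := h1.mul h2
    rw [one_mul] at this
    apply this.congr'
    filter_upwards [eventually_gt_atTop 0] with y hy
    field_simp
  exact hreal.comp tendsto_natCast_atTop_atTop

private lemma gfun_step {x : ℝ} (hx : 0 < x) : gfun (x + 1) < gfun x := by
  have hΓpos : 0 < Real.Gamma x := Real.Gamma_pos_of_pos hx
  have hlog : Real.log (Real.Gamma (x + 1)) = Real.log x + Real.log (Real.Gamma x) := by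
    rw [Real.Gamma_add_one hx.ne', Real.log_mul hx.ne' hΓpos.ne']
  have key := phi_lt_aux (1 / x) (by positivity)
  have hlog2 : Real.log (1 + 1 / x) = Real.log (x + 1) - Real.log x := by
    rw [show (1 : ℝ) + 1 / x = (x + 1) / x by field_simp, Real.log_div (by linarith) hx.ne']
  rw [hlog2] at key
  have hmul : (x + 1/2) * (2 * (1/x) / (2 + 1/x)) = 1 := by
    field_simp
  have h2 : 1 < (x + 1/2) * (Real.log (x + 1) - Real.log x) := by
    calc 1 = (x + 1/2) * (2 * (1/x) / (2 + 1/x)) := hmul.symm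
    _ < (x + 1/2) * (Real.log (x + 1) - Real.log x) := by
        apply mul_lt_mul_of_pos_left key (by linarith)
  simp only [gfun, hlog]
  nlinarith [h2]

private lemma gfun_add_nat {x : ℝ} (hx : 0 < x) (n : ℕ) : gfun (x + n) ≤ gfun x := by
  induction n with
  | zero => simp
  | succ n ih =>
    have h1 : gfun ((x + n) + 1) < gfun (x + n) := gfun_step (by positivity)
    have : gfun (x + (n+1 : ℕ)) = gfun ((x + n) + 1) := by push_cast; ring_nf
    rw [this]
    linarith

open Nat in
private lemma logGamma_lower_aux {y : ℝ} (hy : 0 < y) (hy1 : y ≤ 1) (n : ℕ) (hn : 1 ≤ n) :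
    Real.log (n !) - (1 - y) * Real.log (n + 1) ≤ Real.log (Real.Gamma (y + n)) := by
  set f : ℝ → ℝ := Real.log ∘ Real.Gamma with hf
  have hconv := Real.convexOn_log_Gamma
  have hny : (0:ℝ) < (n:ℝ) := by exact_mod_cast hn
  have h2y : (0:ℝ) < 2 - y := by linarith
  have ha : (0:ℝ) ≤ 1 / (2 - y) := by positivity
  have hb : (0:ℝ) ≤ (1 - y) / (2 - y) := by
    apply div_nonneg <;> linarith
  have hab : 1 / (2 - y) + (1 - y) / (2 - y) = 1 := by
    field_simp
    linarith
  have hmem1 : y + (n:ℝ) ∈ Set.Ioi (0:ℝ) := by simp; linarith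
  have hmem2 : (n:ℝ) + 2 ∈ Set.Ioi (0:ℝ) := by simp; linarith
  have hcomb : (1 / (2 - y)) • (y + (n:ℝ)) + ((1 - y) / (2 - y)) • ((n:ℝ) + 2) = (n:ℝ) + 1 := by
    simp only [smul_eq_mul]
    field_simp
    ring
  have := hconv.2 hmem1 hmem2 ha hb hab
  rw [hcomb, ← hf] at this
  simp only [smul_eq_mul] at this
  have hfn1 : f ((n:ℝ) + 1) = Real.log (n !) := by
    simp only [hf, Function.comp_apply]
    rw [Real.Gamma_nat_eq_factorial]
  have hfn2 : f ((n:ℝ) + 2) = Real.log (n !) + Real.log ((n:ℝ) + 1) := by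
    simp only [hf, Function.comp_apply]
    have : ((n:ℝ) + 2) = ((n+1 : ℕ) : ℝ) + 1 := by push_cast; ring
    rw [this, Real.Gamma_nat_eq_factorial]
    rw [Nat.factorial_succ]
    push_cast
    rw [Real.log_mul (by positivity) (by positivity)]
    ring
  rw [hfn1, hfn2] at this
  have hfy : f (y + n) = Real.log (Real.Gamma (y + n)) := rfl
  rw [hfy] at this
  have h3 := mul_le_mul_of_nonneg_left this h2y.le
  field_simp at h3
  linarith

open Nat in
private lemma gfun_ge_B {y : ℝ} (hy : 0 < y) (hy1 : y ≤ 1) {n : ℕ} (hn : 1 ≤ n) :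
    (Real.log (n !) - ((n : ℝ) + 1/2) * Real.log n + n) + y
      - ((n : ℝ) + (y - 1/2)) * Real.log (1 + y / n)
      - (1 - y) * Real.log (1 + 1 / n) ≤ gfun (y + n) := by
  have hny : (0:ℝ) < (n:ℝ) := by exact_mod_cast hn
  have hrw1 : Real.log (1 + y / n) = Real.log (y + n) - Real.log n := by
    rw [show (1 : ℝ) + y / n = (y + n) / n by field_simp; ring,
      Real.log_div (by positivity) hny.ne']
  have hrw2 : Real.log (1 + 1 / (n:ℝ)) = Real.log ((n:ℝ) + 1) - Real.log n := by
    rw [show (1 : ℝ) + 1 / n = ((n:ℝ) + 1) / n by field_simp,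
      Real.log_div (by positivity) hny.ne']
  have hlow := logGamma_lower_aux hy hy1 n hn
  simp only [gfun]
  rw [hrw1, hrw2]
  nlinarith [hlow]

open Filter Topology Nat in
private lemma B_tendsto {y : ℝ} (hy : 0 < y) :
    Tendsto (fun n : ℕ => (Real.log (n !) - ((n : ℝ) + 1/2) * Real.log n + n) + y
      - ((n : ℝ) + (y - 1/2)) * Real.log (1 + y / n)
      - (1 - y) * Real.log (1 + 1 / n)) atTop
      (𝓝 (Real.log (Real.sqrt (2 * π)))) := by
  have h1 := stirling_log_aux.add_const y
  have h2 := lemA_aux y (y - 1/2)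
  have h3 : Tendsto (fun n : ℕ => (1 - y) * Real.log (1 + 1 / (n:ℝ))) atTop (𝓝 0) := by
    have hl : Tendsto (fun n : ℕ => Real.log (1 + 1 / (n:ℝ))) atTop (𝓝 0) := by
      have hb : Tendsto (fun n : ℕ => 1 + 1 / (n:ℝ)) atTop (𝓝 1) := by
        simpa using (tendsto_const_nhds (x := (1:ℝ))).add tendsto_one_div_atTop_nhds_zero_nat
      have := (Real.continuousAt_log (x := (1:ℝ)) one_ne_zero).tendsto.comp hb
      simpa [Function.comp_def] using this
    simpa using hl.const_mul (1 - y)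
  have := (h1.sub h2).sub h3
  simpa using this

open Filter Topology Nat in
private lemma gfun_ge {z : ℝ} (hz : 0 < z) : Real.log (Real.sqrt (2 * π)) ≤ gfun z := by
  set c : ℕ := ⌈z⌉₊ with hc
  have hc1 : 1 ≤ c := by
    rw [hc]
    exact Nat.one_le_ceil_iff.mpr hz
  set m : ℕ := c - 1 with hm
  have hmc : (m : ℝ) = (c : ℝ) - 1 := by
    rw [hm]
    push_cast [hc1]
    ring
  set y : ℝ := z - m with hy
  have hy0 : 0 < y := by
    rw [hy, hmc]
    have : (c : ℝ) < z + 1 := Nat.ceil_lt_add_one hz.le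
    linarith
  have hy1 : y ≤ 1 := by
    rw [hy, hmc]
    have : z ≤ (c : ℝ) := Nat.le_ceil z
    linarith
  apply le_of_tendsto' ((B_tendsto hy0).comp (tendsto_add_atTop_nat (m + 1)))
  intro n
  have hzy : z = y + m := by rw [hy]; ring
  have hkey := gfun_ge_B hy0 hy1 (n := n + (m + 1)) (by omega)
  have hcast : y + ((n + (m + 1) : ℕ) : ℝ) = z + ((n + 1 : ℕ) : ℝ) := by
    rw [hzy]; push_cast; ring
  rw [hcast] at hkey
  calc ((fun k : ℕ => (Real.log (k !) - ((k : ℝ) + 1/2) * Real.log k + k) + y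
      - ((k : ℝ) + (y - 1/2)) * Real.log (1 + y / k)
      - (1 - y) * Real.log (1 + 1 / k)) ∘ fun k => k + (m + 1)) n
      ≤ gfun (z + ((n + 1 : ℕ) : ℝ)) := hkey
    _ ≤ gfun z := gfun_add_nat hz (n + 1)

theorem log_gamma_lower (x : ℝ) (hx : 0 < x) :
    Real.log (Real.Gamma x) >
      (x - 1 / 2) * Real.log x - x + Real.log (Real.sqrt (2 * π)) := by
  have h1 : gfun (x + 1) < gfun x := gfun_step hx
  have h2 : Real.log (Real.sqrt (2 * π)) ≤ gfun (x + 1) := gfun_ge (by linarith)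
  simp only [gfun] at h1 h2 ⊢
  linarith
end

section
/- For all x > 0, the digamma function satisfies (log Γ(x))' > log x - 1/(2x) - 1/(12x²). -/
open Real Set

/-- The Euler–Maclaurin correction term. -/
noncomputable def dlh (x : ℝ) : ℝ :=
  Real.log (x+1) - Real.log x - 1/(2*x) - 1/(2*(x+1)) + 1/(12*x^2) - 1/(12*(x+1)^2)

lemma dlh_hasDerivAt (x : ℝ) (hx : 0 < x) :
    HasDerivAt dlh (-(1/(6*x^3*(x+1)^3))) x := by
  have hx1 : (0:ℝ) < x + 1 := by linarith
  have h1 : HasDerivAt (fun y : ℝ => Real.log (y+1)) (1/(x+1)) x := by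
    simpa [one_div, Function.comp_def] using (Real.hasDerivAt_log hx1.ne').comp x ((hasDerivAt_id x).add_const 1)
  have h2 : HasDerivAt Real.log x⁻¹ x := Real.hasDerivAt_log hx.ne'
  have h3 : HasDerivAt (fun y : ℝ => 2*y) 2 x := by
    simpa using (hasDerivAt_id x).const_mul 2
  have h4 : HasDerivAt (fun y : ℝ => 2*(y+1)) 2 x := by
    simpa using ((hasDerivAt_id x).add_const 1).const_mul 2
  have h5 : HasDerivAt (fun y : ℝ => 12*y^2) (12*(2*x)) x := by
    simpa using (hasDerivAt_pow 2 x).const_mul 12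
  have h6 : HasDerivAt (fun y : ℝ => 12*(y+1)^2) (12*(2*(x+1))) x := by
    simpa using (((hasDerivAt_id x).add_const 1).pow 2).const_mul 12
  have c1 := (hasDerivAt_const x (1:ℝ)).div h3 (by positivity)
  have c2 := (hasDerivAt_const x (1:ℝ)).div h4 (by positivity)
  have c3 := (hasDerivAt_const x (1:ℝ)).div h5 (by positivity)
  have c4 := (hasDerivAt_const x (1:ℝ)).div h6 (by positivity)
  have H := ((((h1.sub h2).sub c1).sub c2).add c3).sub c4
  have H' : HasDerivAt dlh _ x := H
  convert H' using 1
  field_simp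
  ring

lemma dlh_anti : StrictAntiOn dlh (Ioi 0) := by
  refine strictAntiOn_of_deriv_neg (convex_Ioi 0)
    (fun x hx => (dlh_hasDerivAt x hx).continuousAt.continuousWithinAt) (fun x hx => ?_)
  rw [interior_Ioi] at hx
  rw [(dlh_hasDerivAt x hx).deriv]
  have : (0:ℝ) < 1/(6*x^3*(x+1)^3) := by have := hx.out; positivity
  linarith

lemma dlh_lb (y : ℝ) (hy : 0 < y) : -(1/y) ≤ dlh y := by
  have hy1 : (0:ℝ) < y + 1 := by linarith
  have hlog : 1/(y+1) ≤ Real.log (y+1) - Real.log y := by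
    have h := Real.log_le_sub_one_of_pos (show (0:ℝ) < y/(y+1) by positivity)
    rw [Real.log_div hy.ne' hy1.ne'] at h
    have : y/(y+1) - 1 = -(1/(y+1)) := by field_simp; ring
    linarith [this ▸ h]
  have harith : -(1/y) ≤ 1/(y+1) - 1/(2*y) - 1/(2*(y+1)) + 1/(12*y^2) - 1/(12*(y+1)^2) := by
    rw [← sub_nonneg]
    have e : 1/(y+1) - 1/(2*y) - 1/(2*(y+1)) + 1/(12*y^2) - 1/(12*(y+1)^2) - (-(1/y)) =
        (6*y*(y+1)^2 + 6*y^2*(y+1) + (y+1)^2 - y^2) / (12*y^2*(y+1)^2) := by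
      field_simp
      ring
    rw [e]
    have : (0:ℝ) < 6*y*(y+1)^2 + 6*y^2*(y+1) + (y+1)^2 - y^2 := by nlinarith
    positivity
  unfold dlh
  linarith

lemma dlh_nonneg (x : ℝ) (hx : 0 < x) : 0 ≤ dlh x := by
  by_contra hcon
  push_neg at hcon
  set y := max (x+1) (1/(-dlh x)) with hy
  have hxy : x < y := lt_of_lt_of_le (by linarith) (le_max_left _ _)
  have hy0 : 0 < y := lt_trans hx hxy
  have h1 : dlh y < dlh x := dlh_anti (mem_Ioi.2 hx) (mem_Ioi.2 hy0) hxy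
  have h2 : -(1/y) ≤ dlh y := dlh_lb y hy0
  have h3 : 1/(-dlh x) ≤ y := le_max_right _ _
  have h4 : 1/y ≤ -dlh x := by
    rw [div_le_iff₀ hy0]
    rw [div_le_iff₀ (by linarith : (0:ℝ) < -dlh x)] at h3
    linarith
  linarith

lemma dlh_pos (x : ℝ) (hx : 0 < x) : 0 < dlh x := by
  have h1 : dlh (x+1) < dlh x := dlh_anti (mem_Ioi.2 hx) (mem_Ioi.2 (by linarith)) (by linarith)
  have h2 := dlh_nonneg (x+1) (by linarith)
  linarith

lemma dl_diffAt (x : ℝ) (hx : 0 < x) :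
    DifferentiableAt ℝ (fun y => Real.log (Real.Gamma y)) x := by
  refine DifferentiableAt.log ?_ (Real.Gamma_pos_of_pos hx).ne'
  refine Real.differentiableAt_Gamma (fun m => ?_)
  have : (0:ℝ) ≤ m := Nat.cast_nonneg m
  intro h; rw [h] at hx; linarith

lemma dl_psi_add_one (x : ℝ) (hx : 0 < x) :
    deriv (fun y => Real.log (Real.Gamma y)) (x+1) =
      deriv (fun y => Real.log (Real.Gamma y)) x + 1/x := by
  have heq : (fun y => Real.log (Real.Gamma (y+1)))
      =ᶠ[nhds x] (fun y => Real.log y + Real.log (Real.Gamma y)) := by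
    filter_upwards [eventually_gt_nhds hx] with y hy
    rw [Real.Gamma_add_one hy.ne', Real.log_mul hy.ne' (Real.Gamma_pos_of_pos hy).ne']
  have hd := heq.deriv_eq
  rw [deriv_comp_add_const (fun y => Real.log (Real.Gamma y)) 1] at hd
  rw [hd, deriv_fun_add (Real.differentiableAt_log hx.ne') (dl_diffAt x hx), Real.deriv_log,
    one_div]
  ring

lemma dl_psi_lb (x : ℝ) (hx : 0 < x) :
    Real.log x - 1/x ≤ deriv (fun y => Real.log (Real.Gamma y)) x := by
  have hx1 : (0:ℝ) < x + 1 := by linarith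
  have hs := Real.convexOn_log_Gamma.slope_le_deriv (mem_Ioi.2 hx) (mem_Ioi.2 hx1)
    (by linarith) (by simpa [Function.comp_def] using dl_diffAt (x+1) hx1)
  rw [slope_def_field] at hs
  have hval : (Real.log ∘ Real.Gamma) (x+1) = Real.log x + (Real.log ∘ Real.Gamma) x := by
    simp only [Function.comp_apply]
    rw [Real.Gamma_add_one hx.ne', Real.log_mul hx.ne' (Real.Gamma_pos_of_pos hx).ne']
  rw [hval] at hs
  have hder : deriv (Real.log ∘ Real.Gamma) (x+1) =
      deriv (fun y => Real.log (Real.Gamma y)) x + 1/x := by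
    rw [Function.comp_def]
    exact dl_psi_add_one x hx
  rw [hder] at hs
  have : Real.log x ≤ deriv (fun y => Real.log (Real.Gamma y)) x + 1/x := by
    have h1 : (Real.log x + (Real.log ∘ Real.Gamma) x - (Real.log ∘ Real.Gamma) x) / (x + 1 - x)
        = Real.log x := by field_simp; ring
    rw [h1] at hs; exact hs
  linarith

noncomputable def dlf (x : ℝ) : ℝ :=
  deriv (fun y => Real.log (Real.Gamma y)) x - (Real.log x - 1/(2*x) - 1/(12*x^2))

lemma dlf_step (x : ℝ) (hx : 0 < x) : dlf x = dlh x + dlf (x+1) := by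
  unfold dlf dlh
  rw [dl_psi_add_one x hx]
  ring

lemma dlf_lb (y : ℝ) (hy : 0 < y) : -(1/y) ≤ dlf y := by
  unfold dlf
  have h := dl_psi_lb y hy
  have h1 : (0:ℝ) < 1/(2*y) := by positivity
  have h2 : (0:ℝ) < 1/(12*y^2) := by positivity
  linarith

lemma dlf_tele (x : ℝ) (hx : 0 < x) : ∀ n : ℕ, dlh x + dlf (x + (n+1)) ≤ dlf x := by
  intro n
  induction n with
  | zero => simp [dlf_step x hx]
  | succ k ih =>
    have hk : (0:ℝ) < x + (k+1) := by positivity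
    have := dlf_step (x + (k+1)) hk
    have hpos := dlh_pos (x + (k+1)) hk
    have he : x + ((k:ℝ)+1) + 1 = x + (((k:ℕ)+1:ℕ):ℝ) + 1 := by push_cast; ring
    push_cast
    have : dlf (x + ((k:ℝ) + 1) + 1) ≤ dlf (x + ((k:ℝ)+1)) := by linarith
    calc dlh x + dlf (x + ((k:ℝ) + 1 + 1)) = dlh x + dlf (x + ((k:ℝ)+1) + 1) := by ring_nf
    _ ≤ dlh x + dlf (x + ((k:ℝ)+1)) := by linarith
    _ ≤ dlf x := ih

theorem digamma_lower (x : ℝ) (hx : 0 < x) :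
    deriv (fun y => Real.log (Real.Gamma y)) x >
      Real.log x - 1 / (2 * x) - 1 / (12 * x ^ 2) := by
  have hhx := dlh_pos x hx
  obtain ⟨n, hn⟩ := exists_nat_gt (1 / dlh x)
  have hxn : (0:ℝ) < x + (n+1) := by positivity
  have h1 := dlf_tele x hx n
  have h2 := dlf_lb (x + (n+1)) hxn
  have h3 : 1/(x + (n+1)) < dlh x := by
    rw [div_lt_iff₀ hxn]
    rw [div_lt_iff₀ hhx] at hn
    nlinarith
  have : 0 < dlf x := by linarith
  unfold dlf at this
  linarith
end

section
/- For all x > 0, the digamma function satisfies (log Γ(x))' < log x - 1/(2x). -/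
open Real Set Filter Topology

lemma two_log_lt (s : ℝ) (hs : 1 < s) : 2 * Real.log s < s - 1/s := by
  have h0 : (0:ℝ) < s := by linarith
  set F : ℝ → ℝ := fun t => t - 1/t - 2 * Real.log t with hF
  have hder : ∀ t : ℝ, 0 < t → HasDerivAt F (1 - (-(t^2)⁻¹) - 2 * t⁻¹) t := by
    intro t ht
    have h1 : HasDerivAt (fun t : ℝ => 1/t) (-(t^2)⁻¹) t := by
      simpa [one_div] using hasDerivAt_inv ht.ne'
    exact ((hasDerivAt_id t).sub h1).sub ((Real.hasDerivAt_log ht.ne').const_mul 2)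
  have hmono : StrictMonoOn F (Ici 1) := by
    apply strictMonoOn_of_deriv_pos (convex_Ici 1)
    · intro t ht
      exact (hder t (lt_of_lt_of_le zero_lt_one ht)).continuousAt.continuousWithinAt
    · intro t ht
      rw [interior_Ici] at ht
      have ht1 : (1:ℝ) < t := ht
      have ht0 : (0:ℝ) < t := by linarith
      rw [(hder t ht0).deriv]
      have h2 : 1 - (-(t^2)⁻¹) - 2 * t⁻¹ = (t-1)^2 / t^2 := by field_simp; ring
      rw [h2]
      exact div_pos (pow_pos (by linarith) 2) (pow_pos ht0 2)
  have := hmono (Set.mem_Ici.mpr le_rfl) (Set.mem_Ici.mpr hs.le) hs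
  simp only [hF, Real.log_one] at this
  norm_num at this ⊢
  linarith

lemma trapezoid (t : ℝ) (ht : 0 < t) :
    Real.log (t+1) - Real.log t < (1/t + 1/(t+1))/2 := by
  set s : ℝ := Real.sqrt ((t+1)/t) with hs
  have hq : (1:ℝ) < (t+1)/t := by
    rw [lt_div_iff₀ ht]; linarith
  have hs1 : 1 < s := by
    rw [hs]
    exact (Real.lt_sqrt (by positivity)).mpr (by simpa using hq)
  have hs0 : 0 < s := by linarith
  have hs2 : s^2 = (t+1)/t := Real.sq_sqrt (by positivity)
  have hlog : Real.log (t+1) - Real.log t = 2 * Real.log s := by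
    rw [hs, Real.log_sqrt (by positivity), Real.log_div (by positivity) ht.ne']
    ring
  have hA : t * s = Real.sqrt (t*(t+1)) := by
    have : t * s = Real.sqrt (t^2) * Real.sqrt ((t+1)/t) := by
      rw [Real.sqrt_sq ht.le]
    rw [this, ← Real.sqrt_mul (by positivity)]
    congr 1
    field_simp
  have hkey : s - 1/s = 1/(t*s) := by
    have h1 : s^2 - 1 = 1/t := by rw [hs2]; field_simp; ring
    calc s - 1/s = (s^2 - 1)/s := by field_simp
    _ = (1/t)/s := by rw [h1]
    _ = 1/(t*s) := div_div 1 t s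
  have hAlb : 2*t*(t+1)/(2*t+1) ≤ Real.sqrt (t*(t+1)) := by
    rw [show (2*t*(t+1)/(2*t+1)) = Real.sqrt ((2*t*(t+1)/(2*t+1))^2) from
      (Real.sqrt_sq (by positivity)).symm]
    apply Real.sqrt_le_sqrt
    rw [div_pow, div_le_iff₀ (by positivity)]
    nlinarith [mul_pos ht (by linarith : (0:ℝ) < t+1)]
  have hfin : 1/(t*s) ≤ (1/t + 1/(t+1))/2 := by
    have h2 : (1/t + 1/(t+1))/2 = 1/(2*t*(t+1)/(2*t+1)) := by
      rw [one_div_div]; field_simp; ring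
    rw [h2, hA]
    exact one_div_le_one_div_of_le (by positivity) hAlb
  have := two_log_lt s hs1
  linarith [hlog, hkey, hfin]

theorem digamma_upper (x : ℝ) (hx : 0 < x) :
    deriv (fun y => Real.log (Real.Gamma y)) x < Real.log x - 1 / (2 * x) := by
  have hne : ∀ {y : ℝ}, 0 < y → ∀ m : ℕ, y ≠ -m := by
    intro y hy m
    have : (0:ℝ) ≤ m := Nat.cast_nonneg m
    intro h; rw [h] at hy; linarith
  set f : ℝ → ℝ := Real.log ∘ Real.Gamma with hfdef
  have hgoal : deriv (fun y => Real.log (Real.Gamma y)) x = deriv f x := rfl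
  rw [hgoal]
  have hc : ConvexOn ℝ (Ioi 0) f := Real.convexOn_log_Gamma
  have h_rec : ∀ y : ℝ, 0 < y → f (y + 1) = f y + Real.log y := by
    intro y hy
    simp only [hfdef, Function.comp_apply, Real.Gamma_add_one hy.ne',
      Real.log_mul hy.ne' (Real.Gamma_pos_of_pos hy).ne', add_comm]
  have hder : ∀ {y : ℝ}, 0 < y → DifferentiableAt ℝ f y := by
    intro y hy
    exact (Real.differentiableAt_Gamma (hne hy)).log (Real.Gamma_ne_zero (hne hy))
  have hder_rec : ∀ y : ℝ, 0 < y → deriv f (y + 1) = deriv f y + 1 / y := by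
    intro y hy
    rw [← deriv_comp_add_const, one_div, ← Real.deriv_log,
      ← deriv_add (hder hy) (Real.differentiableAt_log hy.ne')]
    apply Filter.EventuallyEq.deriv_eq
    filter_upwards [eventually_gt_nhds hy] using h_rec
  -- convexity upper bound: deriv f y ≤ log y
  have hUB : ∀ y : ℝ, 0 < y → deriv f y ≤ Real.log y := by
    intro y hy
    have hslope := hc.deriv_le_slope (Set.mem_Ioi.mpr hy)
      (Set.mem_Ioi.mpr (by linarith : (0:ℝ) < y + 1)) (by linarith) (hder hy)
    rwa [slope_def_field, h_rec y hy, add_sub_cancel_left, add_sub_cancel_left, div_one] at hslope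
  -- iterate the recurrence
  have hsum : ∀ n : ℕ, deriv f (x + n) = deriv f x + ∑ k ∈ Finset.range n, 1 / (x + k) := by
    intro n
    induction n with
    | zero => simp
    | succ n ih =>
      have hpos : 0 < x + n := by positivity
      rw [Finset.sum_range_succ, show (x + ((n:ℕ)+1:ℕ) : ℝ) = (x + n) + 1 by push_cast; ring,
        hder_rec _ hpos, ih]
      ring
  set δ : ℝ := (1/x + 1/(x+1))/2 - (Real.log (x+1) - Real.log x) with hδdef
  have hδpos : 0 < δ := by
    have := trapezoid x hx
    simp only [hδdef]; linarith
  -- trapezoid lower bound for the sum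
  have hS : ∀ n : ℕ, Real.log (x + (n+1 : ℕ)) - Real.log x
      + (1/(2*x) - 1/(2*(x + (n+1 : ℕ)))) + δ ≤ ∑ k ∈ Finset.range (n+1), 1 / (x + k) := by
    intro n
    induction n with
    | zero =>
      norm_num [Finset.sum_range_one, hδdef]
      have hx1 : x + 1 ≠ 0 := by positivity
      have h : Real.log (x+1) - Real.log x + (1/(2*x) - 1/(2*(x+1)))
          + ((1/x + 1/(x+1))/2 - (Real.log (x+1) - Real.log x)) = 1/x := by
        field_simp
        ring
      linarith [h.le]
    | succ n ih =>
      rw [Finset.sum_range_succ]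
      set t : ℝ := x + (n+1 : ℕ) with htdef
      have htpos : 0 < t := by positivity
      have htrap := (trapezoid t htpos).le
      have hc1 : (x + ((n:ℕ)+1+1 : ℕ) : ℝ) = t + 1 := by simp only [htdef]; push_cast; ring
      rw [hc1]
      have h2 : Real.log (t+1) - Real.log x + (1/(2*x) - 1/(2*(t+1))) + δ
          ≤ (Real.log t - Real.log x + (1/(2*x) - 1/(2*t)) + δ) + 1/t := by
        have e : 1/(2*t) + (1/t + 1/(t+1))/2 - 1/(2*(t+1)) = 1/t := by
          have : t + 1 ≠ 0 := by positivity
          field_simp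
          ring
        linarith
      exact h2.trans (by linarith [ih])
  -- combine
  have hfinal : ∀ n : ℕ, deriv f x ≤ Real.log x - 1/(2*x) - δ + 1/(2*(x + (n+1 : ℕ))) := by
    intro n
    have h1 := hsum (n+1)
    have h2 := hUB (x + (n+1:ℕ)) (by positivity)
    have h3 := hS n
    linarith
  have hsmall : Tendsto (fun n : ℕ => 1/(2*(x + ((n+1:ℕ):ℝ)))) atTop (𝓝 0) := by
    have t3 : Tendsto (fun n : ℕ => 2*(x + ((n+1:ℕ):ℝ))) atTop atTop := by
      apply Filter.Tendsto.const_mul_atTop two_pos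
      apply Filter.tendsto_atTop_add_const_left
      exact tendsto_natCast_atTop_atTop.comp (tendsto_add_atTop_nat 1)
    exact Filter.Tendsto.congr (fun n => (one_div _).symm) t3.inv_tendsto_atTop
  have hle : deriv f x ≤ Real.log x - 1/(2*x) - δ + 0 := by
    refine ge_of_tendsto (Tendsto.const_add _ hsmall) ?_
    exact Filter.Eventually.of_forall hfinal
  rw [add_zero] at hle
  clear_value δ
  linarith [hle, hδpos]
end

section
/- For all x > 0, the trigamma function satisfies 1/x + 1/(2x²) < (log Γ(x))'' < 1/x + 1/(2x²) + 1/(6x³). -/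
open Real Filter Set Finset Topology

noncomputable section TrigammaAux

def Pd (n : ℕ) (y : ℝ) : ℝ := Real.log n - ∑ m ∈ Finset.range (n + 1), (y + m)⁻¹
def Pdd (n : ℕ) (y : ℝ) : ℝ := ∑ m ∈ Finset.range (n + 1), ((y + m) ^ 2)⁻¹
def Haux (m : ℕ) (y : ℝ) : ℝ := (y + m)⁻¹ - ((m : ℝ) + 1)⁻¹
def psi (y : ℝ) : ℝ := -(∑' m : ℕ, Haux m y) - Real.eulerMascheroniConstant
def Tg (y : ℝ) : ℝ := ∑' m : ℕ, ((y + m) ^ 2)⁻¹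

lemma cmul_le {ε R y : ℝ} (hy : y ∈ Set.Icc ε R) (m : ℕ) :
    min ε 1 * ((m : ℝ) + 1) ≤ y + m := by
  have h1 : min ε 1 * (m : ℝ) ≤ m := by
    have := min_le_right ε 1
    nlinarith [Nat.cast_nonneg (α := ℝ) m]
  have h2 : min ε 1 ≤ y := (min_le_left ε 1).trans hy.1
  nlinarith

lemma cpos {ε : ℝ} (hε : 0 < ε) : 0 < min ε 1 := lt_min hε one_pos

lemma summable_inv_sq : Summable (fun m : ℕ => (((m : ℝ) + 1)⁻¹) ^ 2) := by
  have := Real.summable_one_div_nat_pow (p := 2) |>.2 one_lt_two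
  have h := (summable_nat_add_iff 1).2 this
  refine h.congr fun m => ?_
  push_cast
  rw [one_div, inv_pow]

lemma tuo_shift {F : ℕ → ℝ → ℝ} {f : ℝ → ℝ} {s : Set ℝ}
    (h : TendstoUniformlyOn F f atTop s) :
    TendstoUniformlyOn (fun n => F (n + 1)) f atTop s :=
  fun u hu => (tendsto_add_atTop_nat 1).eventually (h u hu)

lemma tuo_const {b : ℕ → ℝ} {l : ℝ} {s : Set ℝ} (h : Tendsto b atTop (𝓝 l)) :
    TendstoUniformlyOn (fun n (_ : ℝ) => b n) (fun _ => l) atTop s := by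
  rw [Metric.tendstoUniformlyOn_iff]
  intro δ hδ
  filter_upwards [Metric.tendsto_nhds.mp h δ hδ] with n hn y _
  rwa [dist_comm]

-- uniform convergence of Pdd on Icc ε R
lemma tuo_Pdd {ε R : ℝ} (hε : 0 < ε) :
    TendstoUniformlyOn Pdd Tg atTop (Set.Icc ε R) := by
  have key : TendstoUniformlyOn (fun N (y : ℝ) => ∑ m ∈ Finset.range N, ((y + m) ^ 2)⁻¹) Tg atTop
      (Set.Icc ε R) := by
    apply tendstoUniformlyOn_tsum_nat
      (u := fun m => ((min ε 1 * ((m : ℝ) + 1))⁻¹) ^ 2)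
    · refine (summable_inv_sq.mul_left ((min ε 1)⁻¹ ^ 2)).congr fun m => ?_
      rw [mul_inv, mul_pow]
    · intro m y hy
      have h1 : (0 : ℝ) < min ε 1 * ((m : ℝ) + 1) := by positivity
      have h2 := cmul_le hy m
      rw [Real.norm_eq_abs, abs_of_nonneg (by positivity), ← inv_pow]
      exact pow_le_pow_left₀ (inv_nonneg.mpr (h1.trans_le h2).le) (inv_anti₀ h1 h2) 2
  exact tuo_shift key

lemma tuo_neg {F : ℕ → ℝ → ℝ} {f : ℝ → ℝ} {s : Set ℝ}
    (h : TendstoUniformlyOn F f atTop s) :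
    TendstoUniformlyOn (fun n y => -(F n y)) (fun y => -f y) atTop s := by
  rw [Metric.tendstoUniformlyOn_iff] at h ⊢
  intro δ hδ
  filter_upwards [h δ hδ] with n hn y hy
  simpa [Real.dist_eq, abs_sub_comm, neg_add_eq_sub] using hn y hy

lemma tuo_add {F G : ℕ → ℝ → ℝ} {f g : ℝ → ℝ} {s : Set ℝ}
    (hF : TendstoUniformlyOn F f atTop s) (hG : TendstoUniformlyOn G g atTop s) :
    TendstoUniformlyOn (fun n y => F n y + G n y) (fun y => f y + g y) atTop s := by
  rw [Metric.tendstoUniformlyOn_iff] at hF hG ⊢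
  intro δ hδ
  filter_upwards [hF (δ / 2) (by positivity), hG (δ / 2) (by positivity)] with n h1 h2 y hy
  have := dist_add_add_le (f y) (F n y) (g y) (G n y)
  have h3 := h1 y hy
  have h4 := h2 y hy
  calc dist (f y + g y) (F n y + G n y) ≤ dist (f y) (F n y) + dist (g y) (G n y) :=
        dist_add_add_le _ _ _ _
  _ < δ / 2 + δ / 2 := by exact add_lt_add h3 h4
  _ = δ := by ring

-- uniform convergence of H-partial sums on Icc ε R
lemma tuo_H {ε R : ℝ} (hε : 0 < ε) (hR : 0 < R) :
    TendstoUniformlyOn (fun N (y : ℝ) => ∑ m ∈ Finset.range N, Haux m y)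
      (fun y => ∑' m : ℕ, Haux m y) atTop (Set.Icc ε R) := by
  apply tendstoUniformlyOn_tsum_nat
    (u := fun m => (1 + R) * ((min ε 1)⁻¹ * (((m : ℝ) + 1)⁻¹) ^ 2))
  · exact (summable_inv_sq.mul_left _).mul_left _
  · intro m y hy
    have hc := cpos hε
    have h2 := cmul_le hy m
    have hym : (0 : ℝ) < y + m := lt_of_lt_of_le (by positivity) h2
    have hm1 : (0 : ℝ) < (m : ℝ) + 1 := by positivity
    have hH : Haux m y = (1 - y) / ((y + m) * ((m : ℝ) + 1)) := by
      rw [Haux]; field_simp; ring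
    rw [hH, Real.norm_eq_abs, abs_div, abs_of_pos (mul_pos hym hm1)]
    have h1y : |1 - y| ≤ 1 + R := by
      rw [abs_le]
      constructor <;> nlinarith [hy.1, hy.2]
    calc |1 - y| / ((y + m) * ((m : ℝ) + 1)) ≤ (1 + R) / (min ε 1 * ((m : ℝ) + 1) * ((m : ℝ) + 1)) :=
          div_le_div₀ (by positivity) h1y (by exact mul_pos (mul_pos hc hm1) hm1) (by nlinarith)
    _ = (1 + R) * ((min ε 1)⁻¹ * (((m : ℝ) + 1)⁻¹) ^ 2) := by
          rw [div_eq_mul_inv, mul_inv, mul_inv, sq]; ring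

lemma tendsto_Bseq :
    Tendsto (fun n : ℕ => Real.log n - ∑ m ∈ Finset.range (n + 1), ((m : ℝ) + 1)⁻¹) atTop
      (𝓝 (-Real.eulerMascheroniConstant)) := by
  have hh : ∀ n : ℕ, ∑ m ∈ Finset.range (n + 1), ((m : ℝ) + 1)⁻¹ = ((harmonic (n + 1) : ℚ) : ℝ) := by
    intro n
    rw [harmonic]
    push_cast
    rfl
  have h1 : Tendsto (fun n : ℕ => ((harmonic (n + 1) : ℚ) : ℝ) - Real.log (n + 1)) atTop
      (𝓝 Real.eulerMascheroniConstant) := by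
    have h0 := Real.tendsto_harmonic_sub_log.comp (tendsto_add_atTop_nat 1)
    refine h0.congr fun n => ?_
    simp only [Function.comp_apply]
    push_cast
    ring
  have h2 : Tendsto (fun n : ℕ => Real.log (n + 1) - Real.log n) atTop (𝓝 0) :=
    Real.tendsto_log_nat_add_one_sub_log
  have := (h1.add h2).neg
  rw [add_zero] at this
  refine this.congr fun n => ?_
  rw [hh]
  ring

lemma tlu_Pd : TendstoLocallyUniformlyOn Pd psi atTop (Set.Ioi (0 : ℝ)) := by
  rw [tendstoLocallyUniformlyOn_iff_forall_isCompact isOpen_Ioi]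
  intro K hK hKc
  rcases K.eq_empty_or_nonempty with rfl | hne
  · simp [TendstoUniformlyOn]
  · have hinf : sInf K ∈ K := hKc.sInf_mem hne
    have hsup : K ⊆ Set.Icc (sInf K) (sSup K) := fun y hy =>
      ⟨csInf_le hKc.bddBelow hy, le_csSup hKc.bddAbove hy⟩
    have hε : 0 < sInf K := hK hinf
    have hR : 0 < sSup K := hε.trans_le (csInf_le_csSup hne hKc.bddBelow hKc.bddAbove)
    refine TendstoUniformlyOn.mono ?_ hsup
    have hA := tuo_neg (tuo_shift (tuo_H hε hR))
    have hB := tuo_const (s := Set.Icc (sInf K) (sSup K)) tendsto_Bseq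
    have := tuo_add hA hB
    refine this.congr_right (fun y _ => by rw [psi]; ring) |>.congr ?_
    filter_upwards with n
    intro y _
    simp only [Haux, Finset.sum_sub_distrib, Pd]
    ring

lemma tlu_Pdd : TendstoLocallyUniformlyOn Pdd Tg atTop (Set.Ioi (0 : ℝ)) := by
  rw [tendstoLocallyUniformlyOn_iff_forall_isCompact isOpen_Ioi]
  intro K hK hKc
  rcases K.eq_empty_or_nonempty with rfl | hne
  · simp [TendstoUniformlyOn]
  · have hinf : sInf K ∈ K := hKc.sInf_mem hne
    have hsup : K ⊆ Set.Icc (sInf K) (sSup K) := fun y hy =>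
      ⟨csInf_le hKc.bddBelow hy, le_csSup hKc.bddAbove hy⟩
    exact (tuo_Pdd (hK hinf)).mono hsup

lemma hderiv1 (n : ℕ) : ∀ y ∈ Set.Ioi (0 : ℝ),
    HasDerivAt (fun z => Real.BohrMollerup.logGammaSeq z n) (Pd n y) y := by
  intro y hy
  have hy0 : (0 : ℝ) < y := hy
  have h1 : HasDerivAt (fun z : ℝ => z * Real.log n + Real.log (Nat.factorial n)) (Real.log n) y :=
    (hasDerivAt_mul_const _).add_const _
  have h2 : HasDerivAt (fun z : ℝ => ∑ m ∈ Finset.range (n + 1), Real.log (z + m))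
      (∑ m ∈ Finset.range (n + 1), (y + m)⁻¹) y := by
    refine HasDerivAt.fun_sum fun m _ => ?_
    have hne : y + (m : ℝ) ≠ 0 := by positivity
    simpa [one_div] using ((hasDerivAt_id y).add_const (m : ℝ)).log hne
  simpa [Real.BohrMollerup.logGammaSeq, Pd] using h1.fun_sub h2

lemma hderiv2 (n : ℕ) : ∀ y ∈ Set.Ioi (0 : ℝ), HasDerivAt (Pd n) (Pdd n y) y := by
  intro y hy
  have hy0 : (0 : ℝ) < y := hy
  have h2 : HasDerivAt (fun z : ℝ => ∑ m ∈ Finset.range (n + 1), (z + m)⁻¹)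
      (∑ m ∈ Finset.range (n + 1), -(((y + m) ^ 2)⁻¹)) y := by
    refine HasDerivAt.fun_sum fun m _ => ?_
    have hne : y + (m : ℝ) ≠ 0 := by positivity
    simpa [one_div, neg_div] using ((hasDerivAt_id y).add_const (m : ℝ)).fun_inv hne
  have := (hasDerivAt_const y (Real.log n)).fun_sub h2
  rw [show Pd n = fun z : ℝ => Real.log n - ∑ m ∈ Finset.range (n + 1), (z + (m : ℝ))⁻¹ from rfl]
  simpa [Pd, Pdd, Finset.sum_neg_distrib] using this

lemma hasDerivAt_logGamma {y : ℝ} (hy : 0 < y) :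
    HasDerivAt (fun z => Real.log (Real.Gamma z)) (psi y) y :=
  hasDerivAt_of_tendstoLocallyUniformlyOn isOpen_Ioi tlu_Pd
    (Filter.Eventually.of_forall hderiv1)
    (fun z hz => Real.BohrMollerup.tendsto_log_gamma hz) hy

lemma hasDerivAt_psi {y : ℝ} (hy : 0 < y) : HasDerivAt psi (Tg y) y :=
  hasDerivAt_of_tendstoLocallyUniformlyOn isOpen_Ioi tlu_Pdd
    (Filter.Eventually.of_forall hderiv2)
    (fun z hz => tlu_Pd.tendsto_at hz) hy

def aa (t : ℝ) : ℝ := t⁻¹ + (2 * t ^ 2)⁻¹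
def bb (t : ℝ) : ℝ := t⁻¹ + (2 * t ^ 2)⁻¹ + (6 * t ^ 3)⁻¹

lemma keyA {t : ℝ} (ht : 0 < t) :
    (t ^ 2)⁻¹ - (aa t - aa (t + 1)) = (2 * t ^ 2 * (t + 1) ^ 2)⁻¹ := by
  have h1 : t ≠ 0 := ht.ne'
  have h2 : t + 1 ≠ 0 := by positivity
  rw [aa, aa]; field_simp; ring

lemma keyA0 {t : ℝ} (ht : 0 < t) :
    aa t - aa (t + 1) = (2 * t ^ 2 + 4 * t + 1) / (2 * t ^ 2 * (t + 1) ^ 2) := by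
  have h1 : t ≠ 0 := ht.ne'
  have h2 : t + 1 ≠ 0 := by positivity
  rw [aa, aa]; field_simp; ring

lemma keyB {t : ℝ} (ht : 0 < t) :
    (bb t - bb (t + 1)) - (t ^ 2)⁻¹ = (6 * t ^ 3 * (t + 1) ^ 3)⁻¹ := by
  have h1 : t ≠ 0 := ht.ne'
  have h2 : t + 1 ≠ 0 := by positivity
  rw [bb, bb]; field_simp; ring

lemma hasSum_tel (c : ℕ → ℝ) (h0 : ∀ n, 0 ≤ c n - c (n + 1))
    (hlim : Tendsto c atTop (𝓝 0)) : HasSum (fun n => c n - c (n + 1)) (c 0) := by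
  rw [hasSum_iff_tendsto_nat_of_nonneg h0]
  have : ∀ n, ∑ i ∈ Finset.range n, (c i - c (i + 1)) = c 0 - c n := fun n =>
    Finset.sum_range_sub' c n
  simp_rw [this]
  simpa using tendsto_const_nhds.sub hlim

section Tele

variable {x : ℝ} (hx : 0 < x)

lemma tendsto_add_nat_atTop : Tendsto (fun n : ℕ => x + (n : ℝ)) atTop atTop :=
  tendsto_atTop_add_const_left _ x tendsto_natCast_atTop_atTop

include hx

lemma xm_pos (m : ℕ) : 0 < x + (m : ℝ) := by positivity

lemma aa_anti {t : ℝ} (ht : 0 < t) : 0 ≤ aa t - aa (t + 1) := by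
  rw [keyA0 ht]; positivity

lemma bb_anti {t : ℝ} (ht : 0 < t) : 0 ≤ bb t - bb (t + 1) := by
  have hk := keyB ht
  have h1 : (0:ℝ) < (t ^ 2)⁻¹ := by positivity
  have h2 : (0:ℝ) ≤ (6 * t ^ 3 * (t + 1) ^ 3)⁻¹ := by positivity
  linarith

lemma cast_succ_eq (n : ℕ) : x + ((n + 1 : ℕ) : ℝ) = x + n + 1 := by push_cast; ring

lemma hasSum_aa : HasSum (fun m : ℕ => aa (x + m) - aa (x + m + 1)) (aa x) := by
  have h := hasSum_tel (fun n : ℕ => aa (x + n))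
    (fun n => by beta_reduce; rw [cast_succ_eq hx]; exact aa_anti hx (xm_pos hx n)) ?_
  · have h2 : (fun n : ℕ => aa (x + n) - aa (x + n + 1)) =
        fun n : ℕ => aa (x + n) - aa (x + ((n + 1 : ℕ) : ℝ)) := by
      funext m; rw [cast_succ_eq hx]
    rw [h2]
    simpa using h
  · have ht := tendsto_add_nat_atTop (x := x)
    have h1 : Tendsto (fun n : ℕ => (x + (n : ℝ))⁻¹) atTop (𝓝 0) :=
      tendsto_inv_atTop_zero.comp ht
    have h2 : Tendsto (fun n : ℕ => (2 * (x + (n : ℝ)) ^ 2)⁻¹) atTop (𝓝 0) := by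
      refine tendsto_inv_atTop_zero.comp ?_
      have := (ht.atTop_mul_atTop₀ ht).const_mul_atTop two_pos
      refine this.congr fun n => by ring
    simpa [aa] using h1.add h2

lemma hasSum_bb : HasSum (fun m : ℕ => bb (x + m) - bb (x + m + 1)) (bb x) := by
  have h := hasSum_tel (fun n : ℕ => bb (x + n))
    (fun n => by beta_reduce; rw [cast_succ_eq hx]; exact bb_anti hx (xm_pos hx n)) ?_
  · have h2 : (fun n : ℕ => bb (x + n) - bb (x + n + 1)) =
        fun n : ℕ => bb (x + n) - bb (x + ((n + 1 : ℕ) : ℝ)) := by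
      funext m; rw [cast_succ_eq hx]
    rw [h2]
    simpa using h
  · have ht := tendsto_add_nat_atTop (x := x)
    have h1 : Tendsto (fun n : ℕ => (x + (n : ℝ))⁻¹) atTop (𝓝 0) :=
      tendsto_inv_atTop_zero.comp ht
    have h2 : Tendsto (fun n : ℕ => (2 * (x + (n : ℝ)) ^ 2)⁻¹) atTop (𝓝 0) := by
      refine tendsto_inv_atTop_zero.comp ?_
      have := (ht.atTop_mul_atTop₀ ht).const_mul_atTop two_pos
      refine this.congr fun n => by ring
    have h3 : Tendsto (fun n : ℕ => (6 * (x + (n : ℝ)) ^ 3)⁻¹) atTop (𝓝 0) := by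
      refine tendsto_inv_atTop_zero.comp ?_
      have := ((ht.atTop_mul_atTop₀ ht).atTop_mul_atTop₀ ht).const_mul_atTop
        (by norm_num : (0:ℝ) < 6)
      refine this.congr fun n => by ring
    simpa [bb] using (h1.add h2).add h3

lemma g_le_U (m : ℕ) : ((x + (m : ℝ)) ^ 2)⁻¹ < bb (x + m) - bb (x + m + 1) := by
  have hp := xm_pos hx m
  have hk := keyB hp
  nlinarith [inv_pos.mpr (mul_pos (mul_pos (by norm_num : (0:ℝ)<6) (pow_pos hp 3)) (pow_pos (by linarith : (0:ℝ) < x + m + 1) 3))]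

lemma L_le_g (m : ℕ) : aa (x + m) - aa (x + m + 1) < ((x + (m : ℝ)) ^ 2)⁻¹ := by
  have hp := xm_pos hx m
  have hk := keyA hp
  nlinarith [inv_pos.mpr (mul_pos (mul_pos (by norm_num : (0:ℝ)<2) (pow_pos hp 2)) (pow_pos (by linarith : (0:ℝ) < x + m + 1) 2))]

lemma summable_g : Summable (fun m : ℕ => ((x + (m : ℝ)) ^ 2)⁻¹) :=
  Summable.of_nonneg_of_le (fun m => by positivity) (fun m => (g_le_U hx m).le)
    (hasSum_bb hx).summable

lemma Tg_lt_bb : Tg x < bb x := by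
  rw [Tg, ← (hasSum_bb hx).tsum_eq]
  exact Summable.tsum_lt_tsum_of_nonneg (fun m => by positivity) (fun m => (g_le_U hx m).le)
    (g_le_U hx 0) (hasSum_bb hx).summable

lemma aa_lt_Tg : aa x < Tg x := by
  rw [Tg, ← (hasSum_aa hx).tsum_eq]
  refine Summable.tsum_lt_tsum_of_nonneg (fun m => ?_) (fun m => (L_le_g hx m).le)
    (L_le_g hx 0) (summable_g hx)
  rw [keyA0 (xm_pos hx m)]
  positivity

end Tele

end TrigammaAux

theorem trigamma_bounds (x : ℝ) (hx : 0 < x) :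
    1 / x + 1 / (2 * x ^ 2) < iteratedDeriv 2 (fun y => Real.log (Real.Gamma y)) x ∧
    iteratedDeriv 2 (fun y => Real.log (Real.Gamma y)) x
      < 1 / x + 1 / (2 * x ^ 2) + 1 / (6 * x ^ 3) := by
  have hmem : x ∈ Set.Ioi (0 : ℝ) := hx
  have e2 : iteratedDeriv 2 (fun y => Real.log (Real.Gamma y)) x = Tg x := by
    rw [iteratedDeriv_succ, iteratedDeriv_one]
    have hev : deriv (fun y => Real.log (Real.Gamma y)) =ᶠ[𝓝 x] psi := by
      filter_upwards [isOpen_Ioi.mem_nhds hmem] with y hy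
      exact (hasDerivAt_logGamma hy).deriv
    rw [hev.deriv_eq]
    exact (hasDerivAt_psi hx).deriv
  rw [e2]
  have ha : 1 / x + 1 / (2 * x ^ 2) = aa x := by rw [aa, one_div, one_div]
  have hb : 1 / x + 1 / (2 * x ^ 2) + 1 / (6 * x ^ 3) = bb x := by
    rw [bb, one_div, one_div, one_div]
  rw [hb, ha]
  exact ⟨aa_lt_Tg hx, Tg_lt_bb hx⟩
end

section
/- The sequence {(4^n - 1)^{1/n}}_{n≥1} is log-concave, i.e., ((4^n - 1)^{1/n})² ≥ (4^{n-1} - 1)^{1/(n-1)} · (4^{n+1} - 1)^{1/(n+1)} for all n ≥ 2. -/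
theorem pow4_sub_one_root_log_concave (n : ℕ) (hn : 2 ≤ n) :
    ((((4 : ℝ) ^ n - 1) ^ ((1 : ℝ) / n)) ^ 2) ≥
      (((4 : ℝ) ^ (n - 1) - 1) ^ ((1 : ℝ) / (n - 1 : ℕ))) *
      (((4 : ℝ) ^ (n + 1) - 1) ^ ((1 : ℝ) / (n + 1))) := by
  obtain ⟨m, rfl⟩ : ∃ m, n = m + 2 := ⟨n - 2, by omega⟩
  simp only [show m + 2 - 1 = m + 1 from rfl]
  have hq : (1:ℝ) ≤ (4:ℝ) ^ m := one_le_pow₀ (by norm_num)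
  have e1 : (4:ℝ) ^ (m+1) = 4 ^ m * 4 := pow_succ 4 m
  have e2 : (4:ℝ) ^ (m+2) = 4 ^ m * 16 := by rw [pow_add]; norm_num
  have e3 : (4:ℝ) ^ (m+3) = 4 ^ m * 64 := by rw [pow_add]; norm_num
  have hb0 : (0:ℝ) < 4 ^ (m+1) - 1 := by rw [e1]; nlinarith
  have hb1 : (0:ℝ) < 4 ^ (m+2) - 1 := by rw [e2]; nlinarith
  have hb2 : (0:ℝ) < 4 ^ (m+3) - 1 := by rw [e3]; nlinarith
  rw [ge_iff_le, Real.rpow_def_of_pos hb0, Real.rpow_def_of_pos hb2,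
    Real.rpow_def_of_pos hb1, ← Real.exp_add, sq, ← Real.exp_add, Real.exp_le_exp]
  set A := Real.log (4 ^ (m+1) - 1) with hA
  set B := Real.log (4 ^ (m+2) - 1) with hB
  set C := Real.log (4 ^ (m+3) - 1) with hC
  set G := Real.log 4 with hG
  -- h1 : log-concavity of 4^k - 1 itself
  have h1 : A + C ≤ 2 * B := by
    have halg : (4 ^ (m+1) - 1) * (4 ^ (m+3) - 1) ≤ ((4:ℝ) ^ (m+2) - 1) ^ 2 := by
      rw [e1, e2, e3]; nlinarith
    have := Real.log_le_log (mul_pos hb0 hb2) halg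
    rw [Real.log_mul hb0.ne' hb2.ne', Real.log_pow] at this
    push_cast at this
    linarith [this]
  -- h2 : A + 2 log 4 ≤ C
  have h2 : A + 2 * G ≤ C := by
    have halg : (4 ^ (m+1) - 1) * 16 ≤ (4:ℝ) ^ (m+3) - 1 := by
      rw [e1, e3]; nlinarith
    have := Real.log_le_log (by positivity) halg
    rw [Real.log_mul hb0.ne' (by norm_num)] at this
    have l16 : Real.log 16 = 2 * G := by
      rw [hG, show (16:ℝ) = 4 ^ 2 by norm_num, Real.log_pow]; push_cast; ring
    linarith [this, l16.le]
  -- h3 : C ≤ (m+3) log 4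
  have h3 : C ≤ ((m:ℝ) + 3) * G := by
    have halg : (4:ℝ) ^ (m+3) - 1 ≤ (4:ℝ) ^ (m+3) := by linarith
    have := Real.log_le_log hb2 halg
    rw [Real.log_pow] at this
    push_cast at this
    linarith [this]
  set M := (m : ℝ) with hM
  have hM0 : 0 ≤ M := Nat.cast_nonneg m
  have key : (M+2) * (M+3) * A + (M+2) * (M+1) * C ≤ 2 * ((M+1) * (M+3)) * B := by
    have p1 : (M+1) * (M+3) * (A + C) ≤ (M+1) * (M+3) * (2 * B) :=
      mul_le_mul_of_nonneg_left h1 (by nlinarith)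
    have p2 : (M+3) * (A + 2 * G) ≤ (M+3) * C :=
      mul_le_mul_of_nonneg_left h2 (by linarith)
    nlinarith [p1, p2, h3]
  -- now reduce the goal with divisions to `key`
  have hd0 : (0:ℝ) < M + 1 := by linarith
  have hd1 : (0:ℝ) < M + 2 := by linarith
  have hd2 : (0:ℝ) < M + 3 := by linarith
  push_cast
  have eL : A * (1 / (M + 1)) + C * (1 / (M + 2 + 1)) =
      ((M+2) * (M+3) * A + (M+2) * (M+1) * C) / ((M+1) * (M+2) * (M+3)) := by
    field_simp
    ring
  have eR : B * (1 / (M + 2)) + B * (1 / (M + 2)) =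
      (2 * ((M+1) * (M+3)) * B) / ((M+1) * (M+2) * (M+3)) := by
    field_simp
    ring
  calc A * (1 / (M + 1)) + C * (1 / (M + 2 + 1))
      = ((M+2) * (M+3) * A + (M+2) * (M+1) * C) / ((M+1) * (M+2) * (M+3)) := eL
    _ ≤ (2 * ((M+1) * (M+3)) * B) / ((M+1) * (M+2) * (M+3)) := by
        exact div_le_div_of_nonneg_right key (by positivity)
    _ = B * (1 / (M + 2)) + B * (1 / (M + 2)) := eR.symm
end

section
/- The sequence {C(2n, n)^{1/n}}_{n≥1} of n-th roots of central binomial coefficients is strictly log-concave. -/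
open Real

lemma cb_sq_le (k : ℕ) : ((2*k).choose k)^2 * (3*k+1) ≤ 16^k := by
  induction k with
  | zero => simp
  | succ k ih =>
    have hrec : (k+1) * (2*(k+1)).choose (k+1) = 2*(2*k+1) * ((2*k).choose k) :=
      Nat.succ_mul_centralBinom_succ k
    have hpos : 0 < (k+1)^2 := by positivity
    refine Nat.le_of_mul_le_mul_left ?_ hpos
    calc (k+1)^2 * (((2*(k+1)).choose (k+1))^2 * (3*(k+1)+1))
        = ((k+1) * (2*(k+1)).choose (k+1))^2 * (3*k+4) := by ring
      _ = (2*(2*k+1) * ((2*k).choose k))^2 * (3*k+4) := by rw [hrec]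
      _ = (2*(2*k+1))^2 * (3*k+4) * ((2*k).choose k)^2 := by ring
      _ ≤ 16*(k+1)^2 * (((2*k).choose k)^2 * (3*k+1)) := by nlinarith [sq_nonneg ((2*k).choose k)]
      _ ≤ 16*(k+1)^2 * 16^k := Nat.mul_le_mul_left _ ih
      _ = (k+1)^2 * 16^(k+1) := by ring

lemma log7_gt : (7:ℝ)/4 < Real.log 7 := by
  rw [Real.lt_log_iff_exp_lt (by norm_num)]
  have h4 : Real.exp (7/4) ^ 4 = Real.exp 1 ^ 7 := by
    rw [← Real.exp_nat_mul, ← Real.exp_nat_mul]; norm_num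
  have h1 : Real.exp 1 ^ 7 < 2.7182818286 ^ 7 :=
    pow_lt_pow_left₀ Real.exp_one_lt_d9 (le_of_lt (Real.exp_pos 1)) (by norm_num)
  have h2 : (2.7182818286:ℝ) ^ 7 < 7^4 := by norm_num
  exact lt_of_pow_lt_pow_left₀ 4 (by norm_num : (0:ℝ) ≤ 7) (by rw [h4]; linarith)

lemma log4_gt : (1:ℝ) < Real.log 4 := by
  rw [Real.lt_log_iff_exp_lt (by norm_num)]
  linarith [Real.exp_one_lt_d9]

set_option maxHeartbeats 1000000 in
theorem central_binom_root_strict_log_concave (n : ℕ) (hn : 2 ≤ n) :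
    (((Nat.choose (2 * n) n : ℝ)) ^ ((1 : ℝ) / n)) ^ 2 >
      ((Nat.choose (2 * (n - 1)) (n - 1) : ℝ)) ^ ((1 : ℝ) / (n - 1 : ℕ)) *
      ((Nat.choose (2 * (n + 1)) (n + 1) : ℝ)) ^ ((1 : ℝ) / (n + 1)) := by
  obtain ⟨k, rfl⟩ : ∃ k, n = k + 1 := ⟨n - 1, by omega⟩
  have hk : 1 ≤ k := by omega
  simp only [Nat.add_sub_cancel]
  have hkR1 : (1:ℝ) ≤ (k:ℝ) := by exact_mod_cast hk
  have hC0pos : (0:ℝ) < ((2*k).choose k : ℝ) := by exact_mod_cast Nat.centralBinom_pos k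
  have hC1pos : (0:ℝ) < ((2*(k+1)).choose (k+1) : ℝ) := by exact_mod_cast Nat.centralBinom_pos (k+1)
  have hC2pos : (0:ℝ) < ((2*(k+2)).choose (k+2) : ℝ) := by exact_mod_cast Nat.centralBinom_pos (k+2)
  -- recurrences cast to ℝ
  have rec1 : ((k:ℝ)+1) * ((2*(k+1)).choose (k+1) : ℝ) = (2*(2*(k:ℝ)+1)) * ((2*k).choose k : ℝ) := by
    exact_mod_cast congrArg (Nat.cast : ℕ → ℝ) (Nat.succ_mul_centralBinom_succ k)
  have rec2 : ((k:ℝ)+2) * ((2*(k+2)).choose (k+2) : ℝ)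
      = (2*(2*(k:ℝ)+3)) * ((2*(k+1)).choose (k+1) : ℝ) := by
    have h : ((k:ℝ)+1+1) * ((2*(k+2)).choose (k+2) : ℝ)
        = (2*(2*((k:ℝ)+1)+1)) * ((2*(k+1)).choose (k+1) : ℝ) := by
      exact_mod_cast congrArg (Nat.cast : ℕ → ℝ) (Nat.succ_mul_centralBinom_succ (k+1))
    linear_combination h
  have hcb : ((2*k).choose k : ℝ)^2 * (3*(k:ℝ)+1) ≤ (16:ℝ)^k := by
    exact_mod_cast cb_sq_le k
  rw [gt_iff_lt, ← Real.log_lt_log_iff (by positivity) (by positivity)]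
  rw [Real.log_mul (by positivity) (by positivity), Real.log_pow,
      Real.log_rpow hC0pos, Real.log_rpow hC1pos, Real.log_rpow hC2pos]
  push_cast
  set kR : ℝ := (k:ℝ) with hkRdef
  have hkpos : (0:ℝ) < kR := by linarith
  set L0 := Real.log ((2*k).choose k : ℝ) with hL0def
  set L1 := Real.log ((2*(k+1)).choose (k+1) : ℝ) with hL1def
  set L2 := Real.log ((2*(k+2)).choose (k+2) : ℝ) with hL2def
  -- log forms
  have hlog1 : Real.log (kR+1) + L1 = Real.log (2*(2*kR+1)) + L0 := by
    rw [hL1def, hL0def, ← Real.log_mul (by positivity) (by positivity),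
        ← Real.log_mul (by positivity) (by positivity), rec1]
  have hlog2 : Real.log (kR+2) + L2 = Real.log (2*(2*kR+3)) + L1 := by
    rw [hL2def, hL1def, ← Real.log_mul (by positivity) (by positivity),
        ← Real.log_mul (by positivity) (by positivity), rec2]
  have d1 : Real.log (2*(2*kR+1)) = Real.log 2 + Real.log (2*kR+1) :=
    Real.log_mul two_ne_zero (by positivity)
  have d2 : Real.log (2*kR+2) = Real.log 2 + Real.log (kR+1) := by
    rw [show (2:ℝ)*kR+2 = 2*(kR+1) by ring, Real.log_mul two_ne_zero (by positivity)]
  have d3 : Real.log (2*(2*kR+3)) = Real.log 2 + Real.log (2*kR+3) :=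
    Real.log_mul two_ne_zero (by positivity)
  have d4 : Real.log (2*kR+4) = Real.log 2 + Real.log (kR+2) := by
    rw [show (2:ℝ)*kR+4 = 2*(kR+2) by ring, Real.log_mul two_ne_zero (by positivity)]
  have e1 : L1 = L0 + 2*Real.log 2 + Real.log (2*kR+1) - Real.log (2*kR+2) := by linarith
  have e2 : L2 = L1 + 2*Real.log 2 + Real.log (2*kR+3) - Real.log (2*kR+4) := by linarith
  -- upper bound on L0
  have hlogcb := Real.log_le_log (by positivity) hcb
  rw [Real.log_mul (by positivity) (by positivity), Real.log_pow, Real.log_pow] at hlogcb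
  have hlog16 : Real.log 16 = 4 * Real.log 2 := by
    rw [show (16:ℝ) = 2^4 by norm_num, Real.log_pow]; norm_num
  have HB : 2*L0 + Real.log (3*kR+1) ≤ 4*kR*Real.log 2 := by
    rw [hlog16] at hlogcb; push_cast at hlogcb; linarith
  -- elementary log bounds
  have B1 : Real.log (2*kR+2) - Real.log (2*kR+1) ≤ 1/(2*kR+1) := by
    have h := Real.log_le_sub_one_of_pos (show (0:ℝ) < (2*kR+2)/(2*kR+1) by positivity)
    rw [Real.log_div (by positivity) (by positivity)] at h
    have h2 : (2*kR+2)/(2*kR+1) - 1 = 1/(2*kR+1) := by field_simp; ring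
    linarith
  have B2 : 1/(2*kR+4) ≤ Real.log (2*kR+4) - Real.log (2*kR+3) := by
    have h := Real.log_le_sub_one_of_pos (show (0:ℝ) < (2*kR+3)/(2*kR+4) by positivity)
    rw [Real.log_div (by positivity) (by positivity)] at h
    have h2 : (2*kR+3)/(2*kR+4) - 1 = -(1/(2*kR+4)) := by field_simp; ring
    linarith
  have M1 : kR*(kR+3)*(Real.log (2*kR+2) - Real.log (2*kR+1)) ≤ kR*(kR+3)/(2*kR+1) := by
    have h0 : (0:ℝ) ≤ kR*(kR+3) := by nlinarith
    have h := mul_le_mul_of_nonneg_left B1 h0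
    rw [mul_one_div] at h
    exact h
  have M2 : kR*(kR+1)/(2*kR+4) ≤ kR*(kR+1)*(Real.log (2*kR+4) - Real.log (2*kR+3)) := by
    have h0 : (0:ℝ) ≤ kR*(kR+1) := by nlinarith
    have h := mul_le_mul_of_nonneg_left B2 h0
    rw [mul_one_div] at h
    exact h
  -- the key numeric bound
  have B3 : kR*(kR+3)/(2*kR+1) - kR*(kR+1)/(2*kR+4) < Real.log (3*kR+1) := by
    rcases Nat.lt_or_ge k 2 with hk2 | hk2
    · have hk1 : k = 1 := by omega
      subst hk1
      have : kR = 1 := by norm_num [hkRdef]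
      rw [this]
      norm_num
      linarith [log4_gt]
    · have hkR2 : (2:ℝ) ≤ kR := by rw [hkRdef]; exact_mod_cast hk2
      have hb : kR*(kR+3)/(2*kR+1) - kR*(kR+1)/(2*kR+4) ≤ 7/4 := by
        rw [div_sub_div _ _ (by positivity : (2*kR+1:ℝ) ≠ 0) (by positivity : (2*kR+4:ℝ) ≠ 0),
            div_le_iff₀ (by positivity)]
        nlinarith
      have h7 : Real.log 7 ≤ Real.log (3*kR+1) :=
        Real.log_le_log (by norm_num) (by linarith)
      linarith [log7_gt]
  -- assemble
  have key : (kR+1)*(kR+2)*L0 + kR*(kR+1)*L2 < 2*kR*(kR+2)*L1 := by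
    rw [e2, e1]
    nlinarith [HB, M1, M2, B3]
  have expand : 2*(1/(kR+1)*L1) - (1/kR*L0 + 1/(kR+1+1)*L2)
      = (2*kR*(kR+2)*L1 - ((kR+1)*(kR+2)*L0 + kR*(kR+1)*L2)) / (kR*(kR+1)*(kR+2)) := by
    field_simp
    ring
  have hdenom : (0:ℝ) < kR*(kR+1)*(kR+2) := by positivity
  have := div_pos (by linarith : (0:ℝ) < 2*kR*(kR+2)*L1 - ((kR+1)*(kR+2)*L0 + kR*(kR+1)*L2)) hdenom
  linarith
end

section
/- The sequence of n-th roots of the Catalan numbers, {(C(2n,n)/(n+1))^{1/n}}_{n≥1}, is strictly log-concave. -/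
open Real

/-- real log of the catalan numbers -/
noncomputable def catL (n : ℕ) : ℝ := Real.log (catalan n)

lemma catalan_pos' (n : ℕ) : 0 < catalan n := by
  have h2 := succ_mul_catalan_eq_centralBinom n
  have h := n.centralBinom_pos
  rcases Nat.eq_zero_or_pos (catalan n) with h0 | h0
  · rw [h0, mul_zero] at h2; omega
  · exact h0

lemma cat_real_pos (n : ℕ) : (0 : ℝ) < (catalan n : ℝ) := by
  exact_mod_cast catalan_pos' n

lemma cat_rec (n : ℕ) :
    ((n : ℝ) + 2) * (catalan (n + 1) : ℝ) = (2 * (2 * (n : ℝ) + 1)) * (catalan n : ℝ) := by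
  have h1 := succ_mul_catalan_eq_centralBinom (n + 1)
  have h2 := Nat.succ_mul_centralBinom_succ n
  have h3 := succ_mul_catalan_eq_centralBinom n
  have key : (n + 1) * ((n + 1 + 1) * catalan (n + 1)) = (n + 1) * (2 * (2 * n + 1) * catalan n) :=
    calc (n + 1) * ((n + 1 + 1) * catalan (n + 1)) = (n + 1) * Nat.centralBinom (n + 1) := by
          rw [h1]
      _ = 2 * (2 * n + 1) * Nat.centralBinom n := h2
      _ = 2 * (2 * n + 1) * ((n + 1) * catalan n) := by rw [h3]
      _ = (n + 1) * (2 * (2 * n + 1) * catalan n) := by ring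
  have key2 : (n + 1 + 1) * catalan (n + 1) = 2 * (2 * n + 1) * catalan n :=
    Nat.eq_of_mul_eq_mul_left (Nat.succ_pos n) key
  have := congrArg (fun k : ℕ => (k : ℝ)) key2
  push_cast at this
  linarith [this]

/-- `s n = log ((2n+2)/(2n-1))`, the log-gap to 4 of the catalan ratio. -/
noncomputable def catS (n : ℕ) : ℝ := Real.log ((2 * (n : ℝ) + 2) / (2 * (n : ℝ) - 1))

lemma catS_succ (m : ℕ) :
    catS (m + 1) = Real.log ((2 * (m : ℝ) + 4) / (2 * (m : ℝ) + 1)) := by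
  unfold catS
  push_cast
  ring_nf

lemma catL_step (m : ℕ) : catL (m + 1) = catL m + Real.log 4 - catS (m + 1) := by
  have hrec := cat_rec m
  have hm2 : ((m : ℝ) + 2) ≠ 0 := by positivity
  have hc : (catalan (m + 1) : ℝ) = (2 * (2 * (m : ℝ) + 1)) / ((m : ℝ) + 2) * (catalan m) := by
    field_simp
    linarith [hrec]
  have hratio : (0 : ℝ) < (2 * (m : ℝ) + 1) := by positivity
  unfold catL
  rw [hc, Real.log_mul (by positivity) (ne_of_gt (cat_real_pos m)), catS_succ]
  have h1 : Real.log ((2 * (m : ℝ) + 4) / (2 * (m : ℝ) + 1))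
      = Real.log (2 * (m : ℝ) + 4) - Real.log (2 * (m : ℝ) + 1) :=
    Real.log_div (by positivity) (by positivity)
  have h2 : Real.log ((2 * (2 * (m : ℝ) + 1)) / ((m : ℝ) + 2))
      = Real.log 2 + Real.log (2 * (m : ℝ) + 1) - Real.log ((m : ℝ) + 2) := by
    rw [Real.log_div (by positivity) hm2, Real.log_mul (by norm_num) (by positivity)]
  have h3 : Real.log (2 * (m : ℝ) + 4) = Real.log 2 + Real.log ((m : ℝ) + 2) := by
    rw [← Real.log_mul (by norm_num) hm2]
    ring_nf
  have h4 : Real.log (4 : ℝ) = 2 * Real.log 2 := by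
    rw [show (4 : ℝ) = 2 ^ 2 by norm_num, Real.log_pow]
    push_cast; ring
  rw [h1, h2, h3, h4]
  ring

lemma catS_nonneg (m : ℕ) : 0 ≤ catS (m + 1) := by
  rw [catS_succ]
  apply Real.log_nonneg
  rw [le_div_iff₀ (by positivity)]
  linarith

lemma catS_le (m : ℕ) : catS (m + 1) ≤ 3 / (2 * (m : ℝ) + 1) := by
  rw [catS_succ]
  have h := Real.log_le_sub_one_of_pos (show (0:ℝ) < (2 * (m : ℝ) + 4) / (2 * (m : ℝ) + 1) by positivity)
  have heq : (2 * (m : ℝ) + 4) / (2 * (m : ℝ) + 1) - 1 = 3 / (2 * (m : ℝ) + 1) := by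
    field_simp
    ring
  linarith [h, heq.le, heq.ge]

lemma catS_diff_le (m : ℕ) :
    catS (m + 1) - catS (m + 2) ≤ 6 / ((2 * (m : ℝ) + 1) * (2 * (m : ℝ) + 6)) := by
  rw [catS_succ, show m + 2 = (m + 1) + 1 by ring, catS_succ]
  push_cast
  have e1 : (0:ℝ) < 2 * (m : ℝ) + 1 := by positivity
  have e2 : (0:ℝ) < 2 * (m : ℝ) + 4 := by positivity
  have e3 : (0:ℝ) < 2 * ((m : ℝ) + 1) + 4 := by positivity
  have e4 : (0:ℝ) < 2 * ((m : ℝ) + 1) + 1 := by positivity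
  have h1 : Real.log ((2 * (m : ℝ) + 4) / (2 * (m : ℝ) + 1))
      - Real.log ((2 * ((m : ℝ) + 1) + 4) / (2 * ((m : ℝ) + 1) + 1))
      = Real.log (((2 * (m : ℝ) + 4) * (2 * (m : ℝ) + 3)) / ((2 * (m : ℝ) + 1) * (2 * (m : ℝ) + 6))) := by
    rw [Real.log_div (by positivity) (by positivity), Real.log_div (by positivity) (by positivity),
        Real.log_div (by positivity) (by positivity),
        Real.log_mul (by positivity) (by positivity), Real.log_mul (by positivity) (by positivity)]
    have : (2 : ℝ) * ((m : ℝ) + 1) + 4 = 2 * (m : ℝ) + 6 := by ring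
    rw [this]
    have : (2 : ℝ) * ((m : ℝ) + 1) + 1 = 2 * (m : ℝ) + 3 := by ring
    rw [this]
    ring
  rw [h1]
  have h2 := Real.log_le_sub_one_of_pos
    (show (0:ℝ) < ((2 * (m : ℝ) + 4) * (2 * (m : ℝ) + 3)) / ((2 * (m : ℝ) + 1) * (2 * (m : ℝ) + 6)) by positivity)
  have h3 : ((2 * (m : ℝ) + 4) * (2 * (m : ℝ) + 3)) / ((2 * (m : ℝ) + 1) * (2 * (m : ℝ) + 6)) - 1
      = 6 / ((2 * (m : ℝ) + 1) * (2 * (m : ℝ) + 6)) := by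
    field_simp
    ring
  linarith

lemma catL_one : catL 1 = 0 := by
  unfold catL
  rw [catalan_one]
  norm_num

lemma catL_two : catL 2 = Real.log 2 := by
  unfold catL; rw [catalan_two]; norm_num

lemma catL_three : catL 3 = Real.log 5 := by
  unfold catL; rw [catalan_three]; norm_num

lemma catalan_four : catalan 4 = 14 := by
  norm_num [catalan_eq_centralBinom_div, Nat.centralBinom, Nat.choose]

lemma catL_four : catL 4 = Real.log 14 := by
  unfold catL; rw [catalan_four]; norm_num

lemma catL_upper (n : ℕ) (hn : 4 ≤ n) :
    catL n ≤ catL 4 + ((n : ℝ) - 4) * Real.log 4 := by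
  induction n, hn using Nat.le_induction with
  | base => norm_num
  | succ n hn ih =>
    have h := catL_step n
    have hs := catS_nonneg n
    push_cast
    have : catL (n + 1) ≤ catL n + Real.log 4 := by linarith
    calc catL (n + 1) ≤ catL n + Real.log 4 := this
      _ ≤ catL 4 + ((n : ℝ) - 4) * Real.log 4 + Real.log 4 := by linarith
      _ = catL 4 + ((n : ℝ) + 1 - 4) * Real.log 4 := by ring

lemma log4_eq : Real.log (4 : ℝ) = 2 * Real.log 2 := by
  rw [show (4 : ℝ) = 2 ^ 2 by norm_num, Real.log_pow]
  push_cast; ring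

/-- The key positivity for large `n`. -/
lemma T_pos_big (m : ℕ) (hm : 3 ≤ m) :
    0 < 2 * (((m : ℝ) + 1) ^ 2 - 1) * catL (m + 1)
        - ((m : ℝ) + 1) * ((m : ℝ) + 2) * catL m
        - ((m : ℝ) + 1) * (m : ℝ) * catL (m + 2) := by
  have hx3' : (3 : ℝ) ≤ (m : ℝ) := by exact_mod_cast hm
  set x : ℝ := (m : ℝ) with hxdef
  have hx3 : (3 : ℝ) ≤ x := hx3' 
  have h1 : catL (m + 1) = catL m + Real.log 4 - catS (m + 1) := catL_step m
  have h2 : catL (m + 2) = catL (m + 1) + Real.log 4 - catS (m + 2) := catL_step (m + 1)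
  have hd := catS_diff_le m
  have hs := catS_le m
  have hlog2 := Real.log_two_gt_d9
  -- bound c1
  have hden : (0 : ℝ) < (2 * x + 1) * (2 * x + 6) := by nlinarith
  have c1 : (x + 1) * x * (catS (m + 1) - catS (m + 2)) ≤ 3 / 2 := by
    have hposx : (0 : ℝ) ≤ (x + 1) * x := by nlinarith
    have t1 : (x + 1) * x * (catS (m + 1) - catS (m + 2))
        ≤ (x + 1) * x * (6 / ((2 * x + 1) * (2 * x + 6))) :=
      mul_le_mul_of_nonneg_left hd hposx
    have t2 : (x + 1) * x * (6 / ((2 * x + 1) * (2 * x + 6))) ≤ 3 / 2 := by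
      rw [mul_div_assoc' ((x+1)*x) 6 _, div_le_iff₀ hden]
      nlinarith
    linarith
  -- bound c2
  have c2 : 2 * (x + 1) * catS (m + 1) ≤ 24 / 7 := by
    have hposx : (0 : ℝ) ≤ 2 * (x + 1) := by linarith
    have t1 : 2 * (x + 1) * catS (m + 1) ≤ 2 * (x + 1) * (3 / (2 * x + 1)) :=
      mul_le_mul_of_nonneg_left hs hposx
    have t2 : 2 * (x + 1) * (3 / (2 * x + 1)) ≤ 24 / 7 := by
      rw [mul_div_assoc' (2*(x+1)) 3 _, div_le_iff₀ (by linarith : (0:ℝ) < 2 * x + 1)]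
      linarith
    linarith
  -- bound b2
  have hup := catL_upper (m + 1) (by omega)
  have h14 : catL 4 ≤ 4 * Real.log 2 := by
    rw [catL_four]
    have h16 : Real.log (14 : ℝ) ≤ Real.log 16 := by
      apply Real.log_le_log (by norm_num)
      norm_num
    have : Real.log (16 : ℝ) = 4 * Real.log 2 := by
      rw [show (16 : ℝ) = 2 ^ 4 by norm_num, Real.log_pow]
      push_cast; ring
    linarith
  have hcast : ((m + 1 : ℕ) : ℝ) = x + 1 := by push_cast [hxdef]; ring
  rw [hcast] at hup
  have hb2' : catL (m + 1) ≤ 4 * Real.log 2 + ((x + 1) - 4) * Real.log 4 := by linarith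
  have e : 2 * (x + 1) * Real.log 4 - 2 * (4 * Real.log 2 + ((x + 1) - 4) * Real.log 4)
      = 8 * Real.log 2 := by
    rw [log4_eq]; ring
  have hb2 : 8 * Real.log 2 ≤ 2 * (x + 1) * Real.log 4 - 2 * catL (m + 1) := by linarith
  -- assemble
  have hLm : catL m = catL (m + 1) - Real.log 4 + catS (m + 1) := by linarith
  rw [hLm, h2]
  have expand : 2 * ((x + 1) ^ 2 - 1) * catL (m + 1)
      - (x + 1) * (x + 2) * (catL (m + 1) - Real.log 4 + catS (m + 1))
      - (x + 1) * x * (catL (m + 1) + Real.log 4 - catS (m + 2))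
      = (2 * (x + 1) * Real.log 4 - 2 * catL (m + 1))
        - ((x + 1) * x * (catS (m + 1) - catS (m + 2)) + 2 * (x + 1) * catS (m + 1)) := by
    ring
  linarith [expand.le, expand.ge]

/-- The key positivity: for `m ≥ 1` (i.e. `n = m+1 ≥ 2`),
`2(n²-1) log C_n - n(n+1) log C_{n-1} - n(n-1) log C_{n+1} > 0`. -/
lemma T_pos (m : ℕ) (hm : 1 ≤ m) :
    0 < 2 * (((m : ℝ) + 1) ^ 2 - 1) * catL (m + 1)
        - ((m : ℝ) + 1) * ((m : ℝ) + 2) * catL m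
        - ((m : ℝ) + 1) * (m : ℝ) * catL (m + 2) := by
  match m, hm with
  | 1, _ =>
    have e1 : catL 1 = 0 := catL_one
    have e2 : catL (1 + 1) = Real.log 2 := catL_two
    have e3 : catL (1 + 2) = Real.log 5 := catL_three
    rw [e1, e2, e3]
    have h58 : Real.log (5 : ℝ) < Real.log 8 := Real.log_lt_log (by norm_num) (by norm_num)
    have h8 : Real.log (8 : ℝ) = 3 * Real.log 2 := by
      rw [show (8 : ℝ) = 2 ^ 3 by norm_num, Real.log_pow]
      push_cast; ring
    push_cast
    nlinarith [h58, h8]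
  | 2, _ =>
    have e1 : catL 2 = Real.log 2 := catL_two
    have e2 : catL (2 + 1) = Real.log 5 := catL_three
    have e3 : catL (2 + 2) = Real.log 14 := catL_four
    rw [e1, e2, e3]
    have hlt : Real.log ((2 : ℝ) ^ 12 * 14 ^ 6) < Real.log ((5 : ℝ) ^ 16) :=
      Real.log_lt_log (by positivity) (by norm_num)
    rw [Real.log_mul (by positivity) (by positivity), Real.log_pow, Real.log_pow,
      Real.log_pow] at hlt
    push_cast at hlt ⊢
    nlinarith [hlt]
  | (k + 3), _ =>
    exact T_pos_big (k + 3) (by omega)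

theorem catalan_root_strict_log_concave (n : ℕ) (hn : 2 ≤ n) :
    (((catalan n : ℝ)) ^ ((1 : ℝ) / n)) ^ 2 >
      ((catalan (n - 1) : ℝ)) ^ ((1 : ℝ) / (n - 1 : ℕ)) *
      ((catalan (n + 1) : ℝ)) ^ ((1 : ℝ) / (n + 1)) := by
  obtain ⟨m, rfl⟩ : ∃ m, n = m + 1 := ⟨n - 1, by omega⟩
  have hm : 1 ≤ m := by omega
  have hsub : (m + 1 - 1 : ℕ) = m := by omega
  rw [hsub]
  push_cast
  show (((catalan (m + 1) : ℝ)) ^ ((1 : ℝ) / ((m : ℝ) + 1))) ^ 2 >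
      ((catalan m : ℝ)) ^ ((1 : ℝ) / (m : ℝ)) *
      ((catalan (m + 2) : ℝ)) ^ ((1 : ℝ) / ((m : ℝ) + 1 + 1))
  have hx1 : (1 : ℝ) ≤ (m : ℝ) := by exact_mod_cast hm
  have hp1 := cat_real_pos (m + 1)
  have hp0 := cat_real_pos m
  have hp2 := cat_real_pos (m + 2)
  have hLpos : (0 : ℝ) < (((catalan (m + 1) : ℝ)) ^ ((1 : ℝ) / ((m : ℝ) + 1))) ^ 2 := by
    positivity
  have hRpos : (0 : ℝ) < ((catalan m : ℝ)) ^ ((1 : ℝ) / (m : ℝ)) *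
      ((catalan (m + 2) : ℝ)) ^ ((1 : ℝ) / ((m : ℝ) + 1 + 1)) := by positivity
  rw [gt_iff_lt, ← Real.log_lt_log_iff hRpos hLpos]
  rw [Real.log_pow, Real.log_rpow hp1, Real.log_mul (by positivity) (by positivity),
    Real.log_rpow hp0, Real.log_rpow hp2]
  push_cast
  have hT := T_pos m hm
  unfold catL at hT
  set x : ℝ := (m : ℝ) with hxdef
  set L0 := Real.log ((catalan m : ℝ)) with hL0
  set L1 := Real.log ((catalan (m + 1) : ℝ)) with hL1
  set L2 := Real.log ((catalan (m + 2) : ℝ)) with hL2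
  have h0 : (0 : ℝ) < x := by linarith
  have key : 2 * (1 / (x + 1) * L1) - (1 / x * L0 + 1 / (x + 1 + 1) * L2)
      = (2 * ((x + 1) ^ 2 - 1) * L1 - (x + 1) * (x + 2) * L0 - (x + 1) * x * L2)
        / (x * (x + 1) * (x + 2)) := by
    field_simp
    ring
  have hdiv : 0 < (2 * ((x + 1) ^ 2 - 1) * L1 - (x + 1) * (x + 2) * L0 - (x + 1) * x * L2)
      / (x * (x + 1) * (x + 2)) := by
    apply div_pos _ (by nlinarith)
    exact hT
  linarith [key.le, key.ge, hdiv]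
end

section
/- Let p, q > 0 with 1/p + 1/q ≤ 1. Then for all t > 0 and all u with -1 ≤ u ≤ 0, h(t,u) := 1/(1 - e^{-t}) - e^{-tp(u+1)}/(1 - e^{-pt}) - e^{uqt}/(1 - e^{-qt}) > 0. -/
lemma key_ineq {p t : ℝ} (hp : 1 < p) (ht : 0 < t) :
    p * (Real.exp t - 1) + 1 < Real.exp (p * t) := by
  have hpt : 0 < (p - 1) * t := by nlinarith
  have h1 : (p - 1) * t + 1 < Real.exp ((p - 1) * t) := Real.add_one_lt_exp hpt.ne'
  have h2 : -t + 1 ≤ Real.exp (-t) := Real.add_one_le_exp _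
  have h3 : Real.exp (p * t) = Real.exp t * Real.exp ((p - 1) * t) := by
    rw [← Real.exp_add]; ring_nf
  have h4 : Real.exp (-t) * Real.exp t = 1 := by
    rw [← Real.exp_add]; simp
  have h5 : 1 < Real.exp t := Real.one_lt_exp_iff.mpr ht
  nlinarith [Real.exp_pos (-t), Real.exp_pos t]

theorem h_positive (p q : ℝ) (hp : 0 < p) (hq : 0 < q) (hpq : 1 / p + 1 / q ≤ 1)
    (t : ℝ) (ht : 0 < t) (u : ℝ) (hu1 : -1 ≤ u) (hu2 : u ≤ 0) :
    0 < 1 / (1 - Real.exp (-t)) - Real.exp (-t * p * (u + 1)) / (1 - Real.exp (-(p * t)))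
        - Real.exp (u * q * t) / (1 - Real.exp (-(q * t))) := by
  have hp1 : 1 < p := by
    have h1 : 1 / q > 0 := by positivity
    have : 1 / p < 1 := by linarith
    rwa [div_lt_one hp] at this
  have hq1 : 1 < q := by
    have h1 : 1 / p > 0 := by positivity
    have : 1 / q < 1 := by linarith
    rwa [div_lt_one hq] at this
  set a := Real.exp (-t) with ha_def
  set b := Real.exp (-(p * t)) with hb_def
  set c := Real.exp (-(q * t)) with hc_def
  clear_value a b c
  have ha : 0 < a := ha_def ▸ Real.exp_pos _
  have hb : 0 < b := hb_def ▸ Real.exp_pos _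
  have hc : 0 < c := hc_def ▸ Real.exp_pos _
  have ha1 : a < 1 := ha_def ▸ Real.exp_lt_one_iff.mpr (by linarith)
  have hb1 : b < 1 := hb_def ▸ Real.exp_lt_one_iff.mpr (by nlinarith)
  have hc1 : c < 1 := hc_def ▸ Real.exp_lt_one_iff.mpr (by nlinarith)
  -- relations between a,b,c via key_ineq
  have hea : Real.exp t * a = 1 := by rw [ha_def, ← Real.exp_add]; simp
  have heb : Real.exp (p * t) * b = 1 := by rw [hb_def, ← Real.exp_add]; simp
  have hec : Real.exp (q * t) * c = 1 := by rw [hc_def, ← Real.exp_add]; simp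
  have hkp := key_ineq hp1 ht
  have hkq := key_ineq hq1 ht
  have hden_a : (0:ℝ) < 1 - a := by linarith
  have hden_b : (0:ℝ) < 1 - b := by linarith
  have hden_c : (0:ℝ) < 1 - c := by linarith
  have h1 : Real.exp t = 1 / a := by field_simp [← hea]; exact hea
  have h2 : Real.exp (p * t) = 1 / b := by field_simp [← heb]; exact heb
  have h3 : Real.exp (q * t) = 1 / c := by field_simp [← hec]; exact hec
  rw [h1, h2] at hkp
  rw [h1, h3] at hkq
  have hbp : b / (1 - b) < (1 / p) * (a / (1 - a)) := by
    rw [show 1/p*(a/(1-a)) = a/(p*(1-a)) by field_simp, div_lt_div_iff₀ hden_b (by positivity)]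
    have hm := mul_lt_mul_of_pos_right hkp (by positivity : (0:ℝ) < a * b)
    have e1 : (p * (1/a - 1) + 1) * (a * b) = p * (1 - a) * b + a * b := by
      field_simp
    have e2 : (1/b) * (a * b) = a := by field_simp
    nlinarith
  have hcq : c / (1 - c) < (1 / q) * (a / (1 - a)) := by
    rw [show 1/q*(a/(1-a)) = a/(q*(1-a)) by field_simp, div_lt_div_iff₀ hden_c (by positivity)]
    have hm := mul_lt_mul_of_pos_right hkq (by positivity : (0:ℝ) < a * c)
    have e1 : (q * (1/a - 1) + 1) * (a * c) = q * (1 - a) * c + a * c := by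
      field_simp
    have e2 : (1/c) * (a * c) = a := by field_simp
    nlinarith
  have haa : 0 < a / (1 - a) := by positivity
  have hsum : b / (1 - b) + c / (1 - c) < a / (1 - a) := by
    have : (1/p) * (a/(1-a)) + (1/q) * (a/(1-a)) ≤ a/(1-a) := by nlinarith
    linarith
  -- convexity bounds
  have hu0 : (0:ℝ) ≤ -u := by linarith
  have hu01 : (0:ℝ) ≤ u + 1 := by linarith
  have hA : Real.exp (-t * p * (u + 1)) ≤ (-u) * 1 + (u + 1) * b := by
    have h := convexOn_exp.2 (Set.mem_univ (0:ℝ)) (Set.mem_univ (-(p * t)))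
      hu0 hu01 (by ring)
    simp only [smul_eq_mul] at h
    calc Real.exp (-t * p * (u + 1)) = Real.exp ((-u) * 0 + (u + 1) * (-(p * t))) := by
          congr 1; ring
      _ ≤ (-u) * Real.exp 0 + (u + 1) * Real.exp (-(p * t)) := h
      _ = (-u) * 1 + (u + 1) * b := by rw [Real.exp_zero, hb_def]
  have hB : Real.exp (u * q * t) ≤ (-u) * c + (u + 1) * 1 := by
    have h := convexOn_exp.2 (Set.mem_univ (-(q * t))) (Set.mem_univ (0:ℝ))
      hu0 hu01 (by ring)
    simp only [smul_eq_mul] at h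
    calc Real.exp (u * q * t) = Real.exp ((-u) * (-(q * t)) + (u + 1) * 0) := by
          congr 1; ring
      _ ≤ (-u) * Real.exp (-(q * t)) + (u + 1) * Real.exp 0 := h
      _ = (-u) * c + (u + 1) * 1 := by rw [Real.exp_zero, hc_def]
  have hstep1 : Real.exp (-t * p * (u + 1)) / (1 - b) ≤ ((-u) * 1 + (u + 1) * b) / (1 - b) := by
    gcongr
  have hstep2 : Real.exp (u * q * t) / (1 - c) ≤ ((-u) * c + (u + 1) * 1) / (1 - c) := by
    gcongr
  have hfin : ((-u) * 1 + (u + 1) * b) / (1 - b) + ((-u) * c + (u + 1) * 1) / (1 - c)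
      = 1 + b / (1 - b) + c / (1 - c) := by
    field_simp
    ring
  have hone : 1 / (1 - a) = 1 + a / (1 - a) := by field_simp; ring
  linarith
end

section
/- Let 0 ≤ a₁ ≤ ... ≤ a_n, 0 ≤ b₁ ≤ ... ≤ b_n, and ρ > 0 with ρ ∏_{i=1}^n Γ(a_i)/Γ(b_i) ≥ 1 and ∑_{i=1}^k a_i ≥ ∑_{i=1}^k b_i for each k = 1, ..., n. Then the function χ(x) = (ρ ∏_{i=1}^n Γ(x+a_i)/Γ(x+b_i))^{1/x} is logarithmically completely monotonic on (0, ∞), i.e., (-1)^k (log χ)^{(k)}(x) ≥ 0 for all x > 0 and k ≥ 1. -/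
namespace ChiLCM
open Finset Filter Set Topology

lemma zanti {e : ℤ} (he : e ≤ 0) {p q : ℝ} (hp : 0 < p) (hpq : p ≤ q) :
    q ^ e ≤ p ^ e := by
  obtain ⟨m, rfl⟩ : ∃ m : ℕ, e = -(m : ℤ) := ⟨e.toNat ⊔ (-e).toNat, by omega⟩
  rw [zpow_neg, zpow_neg, zpow_natCast, zpow_natCast]
  exact inv_anti₀ (pow_pos hp m) (pow_le_pow_left₀ hp.le hpq m)

lemma zpos {e : ℤ} {p : ℝ} (hp : 0 < p) : 0 < p ^ e := zpow_pos hp e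

lemma summable_aux {m : ℕ} (hm : 2 ≤ m) {y : ℝ} (hy : 0 < y) :
    Summable fun j : ℕ => (y + (j : ℝ)) ^ (-(m : ℤ)) := by
  set c : ℝ := min y 1 with hc
  have hc0 : 0 < c := lt_min hy one_pos
  have hbase : Summable fun j : ℕ => ((1 + (j : ℝ)) ^ 2)⁻¹ := by
    have h1 : Summable fun j : ℕ => (((j : ℝ)) ^ 2)⁻¹ :=
      Real.summable_nat_pow_inv.mpr one_lt_two
    have h2 := (summable_nat_add_iff 1).mpr h1
    refine h2.congr fun j => ?_
    push_cast
    ring_nf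
  have hS : Summable fun j : ℕ => c ^ (-(m : ℤ)) * ((1 + (j : ℝ)) ^ 2)⁻¹ := hbase.mul_left _
  refine Summable.of_nonneg_of_le (fun j => (zpos (by positivity)).le) (fun j => ?_) hS
  have h1j : (0 : ℝ) < 1 + (j : ℝ) := by positivity
  have hle : c * (1 + (j : ℝ)) ≤ y + (j : ℝ) := by
    rcases le_total y 1 with h | h
    · have : c = y := min_eq_left h
      rw [this]; nlinarith [Nat.cast_nonneg (α := ℝ) j]
    · have : c = 1 :=  min_eq_right h
      rw [this]; nlinarith
  calc (y + (j : ℝ)) ^ (-(m : ℤ)) ≤ (c * (1 + (j : ℝ))) ^ (-(m : ℤ)) :=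
        zanti (by omega) (by positivity) hle
    _ = c ^ (-(m : ℤ)) * (1 + (j : ℝ)) ^ (-(m : ℤ)) := mul_zpow _ _ _
    _ ≤ c ^ (-(m : ℤ)) * ((1 + (j : ℝ)) ^ 2)⁻¹ := by
        refine mul_le_mul_of_nonneg_left ?_ (zpos hc0).le
        rw [zpow_neg, zpow_natCast]
        exact inv_anti₀ (by positivity) (pow_le_pow_right₀ (by linarith) hm)

/-- the `m`-th polygamma-type series -/
noncomputable def sig (m : ℕ) (y : ℝ) : ℝ := ∑' j : ℕ, (y + (j : ℝ)) ^ (-(m : ℤ))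

lemma tluo' (c : ℝ) {m : ℕ} (hm : 2 ≤ m) :
    TendstoLocallyUniformlyOn
      (fun (N : ℕ) (y : ℝ) => ∑ j ∈ range N, c * (y + (j : ℝ)) ^ (-(m : ℤ)))
      (fun y => c * sig m y) atTop (Ioi (0 : ℝ)) := by
  rw [tendstoLocallyUniformlyOn_iff_forall_isCompact isOpen_Ioi]
  intro K hK hKc
  rcases K.eq_empty_or_nonempty with rfl | hne
  · simp [tendstoUniformlyOn_empty]
  obtain ⟨α, hαK, hmin⟩ := hKc.exists_isMinOn hne continuous_id.continuousOn
  have hα : 0 < α := hK hαK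
  have hlim : (fun y : ℝ => c * sig m y) = fun y => ∑' j : ℕ, c * (y + (j : ℝ)) ^ (-(m : ℤ)) := by
    funext y; rw [sig, tsum_mul_left]
  rw [hlim]
  refine tendstoUniformlyOn_tsum_nat ((summable_aux hm hα).mul_left |c|) ?_
  intro j y hy
  have hyα : α ≤ y := hmin hy
  have hy0 : (0 : ℝ) < y := lt_of_lt_of_le hα hyα
  rw [norm_mul, Real.norm_eq_abs, Real.norm_eq_abs, abs_of_pos (zpos (by positivity))]
  exact mul_le_mul_of_nonneg_left (zanti (by omega) (by positivity) (by linarith)) (abs_nonneg c)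

lemma term_hasDerivAt (m : ℕ) (c : ℝ) {y : ℝ} (h : y + c ≠ 0) :
    HasDerivAt (fun z : ℝ => (z + c) ^ (-(m : ℤ)))
      (-(m : ℝ) * (y + c) ^ (-((m + 1 : ℕ) : ℤ))) y := by
  have h1 := hasDerivAt_zpow (-(m : ℤ)) (y + c) (Or.inl h)
  have h2 := h1.comp_add_const y c
  convert h2 using 2
  · rfl
  · rfl
  · push_cast; ring
  · push_cast [sub_eq_add_neg]; ring_nf

lemma sig_hasDerivAt {m : ℕ} (hm : 2 ≤ m) {y : ℝ} (hy : 0 < y) :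
    HasDerivAt (sig m) (-(m : ℝ) * sig (m + 1) y) y := by
  have key : ∀ z ∈ Ioi (0:ℝ), HasDerivAt (sig m) (-(m:ℝ) * sig (m+1) z) z := by
    intro z hz
    refine hasDerivAt_of_tendstoLocallyUniformlyOn
      (f := fun (N : ℕ) (y : ℝ) => ∑ j ∈ range N, (y + (j : ℝ)) ^ (-(m : ℤ)))
      isOpen_Ioi (tluo' (-(m:ℝ)) (show 2 ≤ m + 1 by omega)) ?_ ?_ hz
    · filter_upwards with N u hu
      refine HasDerivAt.fun_sum fun j _ => ?_
      exact term_hasDerivAt m j (by have := mem_Ioi.mp hu; positivity)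
    · intro u hu
      have := (summable_aux hm (mem_Ioi.mp hu)).hasSum.tendsto_sum_nat
      exact this
  exact key y hy


lemma gamma_ne (y : ℝ) (hy : 0 < y) : ∀ m : ℕ, y ≠ -(m : ℝ) := by
  intro m
  have : -(m : ℝ) ≤ 0 := neg_nonpos.mpr (Nat.cast_nonneg m)
  linarith [hy]

noncomputable def psi (y : ℝ) : ℝ := deriv (fun u : ℝ => Real.log (Real.Gamma u)) y

lemma logGamma_diff {y : ℝ} (hy : 0 < y) :
    DifferentiableAt ℝ (fun u : ℝ => Real.log (Real.Gamma u)) y :=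
  (Real.differentiableAt_Gamma (gamma_ne y hy)).log (Real.Gamma_pos_of_pos hy).ne'

lemma logGamma_hasDerivAt {y : ℝ} (hy : 0 < y) :
    HasDerivAt (fun u : ℝ => Real.log (Real.Gamma u)) (psi y) y :=
  (logGamma_diff hy).hasDerivAt

lemma logGamma_rec {u : ℝ} (hu : 0 < u) :
    Real.log (Real.Gamma (u + 1)) = Real.log (Real.Gamma u) + Real.log u := by
  rw [Real.Gamma_add_one hu.ne', Real.log_mul hu.ne' (Real.Gamma_pos_of_pos hu).ne', add_comm]

lemma psi_rec {y : ℝ} (hy : 0 < y) : psi (y + 1) = psi y + y⁻¹ := by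
  have h1 : HasDerivAt (fun u : ℝ => Real.log (Real.Gamma (u + 1))) (psi (y + 1)) y :=
    (logGamma_hasDerivAt (by linarith)).comp_add_const y 1
  have h2 : HasDerivAt (fun u : ℝ => Real.log (Real.Gamma u) + Real.log u) (psi y + y⁻¹) y :=
    (logGamma_hasDerivAt hy).add (Real.hasDerivAt_log hy.ne')
  have heq : (fun u : ℝ => Real.log (Real.Gamma (u + 1))) =ᶠ[nhds y]
      (fun u : ℝ => Real.log (Real.Gamma u) + Real.log u) := by
    filter_upwards [eventually_gt_nhds hy] with u hu
    exact logGamma_rec hu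
  exact h1.unique (h2.congr_of_eventuallyEq heq)

lemma psi_le_log {y : ℝ} (hy : 0 < y) : psi y ≤ Real.log y := by
  have hc := Real.convexOn_log_Gamma
  have hder : DifferentiableAt ℝ (Real.log ∘ Real.Gamma) y := logGamma_diff hy
  have h := hc.deriv_le_slope (mem_Ioi.mpr hy) (mem_Ioi.mpr (by linarith : (0:ℝ) < y + 1))
    (by linarith) hder
  have hslope : slope (Real.log ∘ Real.Gamma) y (y + 1) = Real.log y := by
    rw [slope_def_field]
    simp only [Function.comp_apply, add_sub_cancel_left, div_one]
    rw [logGamma_rec hy]; ring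
  have hpsi : deriv (Real.log ∘ Real.Gamma) y = psi y := rfl
  rw [hslope, hpsi] at h
  exact h

lemma log_le_psi_succ {y : ℝ} (hy : 0 < y) : Real.log y ≤ psi (y + 1) := by
  have hc := Real.convexOn_log_Gamma
  have hder : DifferentiableAt ℝ (Real.log ∘ Real.Gamma) (y + 1) := logGamma_diff (by linarith)
  have h := hc.slope_le_deriv (mem_Ioi.mpr hy) (mem_Ioi.mpr (by linarith : (0:ℝ) < y + 1))
    (by linarith) hder
  have hslope : slope (Real.log ∘ Real.Gamma) y (y + 1) = Real.log y := by
    rw [slope_def_field]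
    simp only [Function.comp_apply, add_sub_cancel_left, div_one]
    rw [logGamma_rec hy]; ring
  rw [hslope] at h
  exact h

lemma psi_shift {y : ℝ} (hy : 0 < y) (n : ℕ) :
    psi (y + n) = psi y + ∑ j ∈ range n, (y + (j : ℝ))⁻¹ := by
  induction n with
  | zero => simp
  | succ n ih =>
    have h1 : y + ((n : ℝ) + 1) = (y + n) + 1 := by ring
    push_cast
    rw [h1, psi_rec (by positivity), ih, sum_range_succ]
    ring

lemma tendsto_phi {y : ℝ} (hy : 0 < y) :
    Tendsto (fun n : ℕ => Real.log (y + n) - ∑ j ∈ range n, (y + (j : ℝ))⁻¹)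
      atTop (nhds (psi y)) := by
  set φ : ℕ → ℝ := fun n => Real.log (y + n) - ∑ j ∈ range n, (y + (j : ℝ))⁻¹ with hφ
  have key : ∀ n : ℕ, φ n - psi y = Real.log (y + n) - psi (y + n) := by
    intro n; rw [hφ]; simp only []
    rw [psi_shift hy n]; ring
  have hlow : ∀ n : ℕ, 0 ≤ φ n - psi y := by
    intro n
    rw [key n]
    have := psi_le_log (show (0:ℝ) < y + n by positivity)
    linarith
  have hhigh : ∀ᶠ n : ℕ in atTop, φ n - psi y ≤ Real.log (1 + ((y + n) - 1)⁻¹) := by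
    filter_upwards [eventually_ge_atTop 1] with n hn
    obtain ⟨m, rfl⟩ : ∃ m, n = m + 1 := ⟨n - 1, by omega⟩
    have hym : (0:ℝ) < y + m := by positivity
    have h1 : Real.log (y + m) ≤ psi (y + (m + 1 : ℕ)) := by
      have := log_le_psi_succ hym
      have he : y + ((m:ℕ) + 1 : ℕ) = (y + m) + 1 := by push_cast; ring
      rw [he]; exact this
    rw [key (m + 1)]
    have he2 : (1 : ℝ) + ((y + ((m:ℕ)+1:ℕ)) - 1)⁻¹ = (y + (m+1:ℕ)) / (y + m) := by
      have : (y + ((m:ℕ)+1:ℕ)) - 1 = y + m := by push_cast; ring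
      rw [this]
      field_simp
      push_cast; ring
    rw [he2, Real.log_div (by positivity) (by positivity)]
    have : y + ((m:ℕ) + 1 : ℕ) = y + ((m:ℕ)+1) := by push_cast; ring
    linarith [h1]
  have hb : Tendsto (fun n : ℕ => Real.log (1 + ((y + n) - 1)⁻¹)) atTop (nhds 0) := by
    have h1 : Tendsto (fun n : ℕ => (y + (n:ℝ)) - 1) atTop atTop := by
      apply tendsto_atTop_add_const_right
      exact tendsto_atTop_add_const_left _ _ tendsto_natCast_atTop_atTop
    have h2 : Tendsto (fun n : ℕ => 1 + ((y + (n:ℝ)) - 1)⁻¹) atTop (nhds 1) := by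
      have := (tendsto_inv_atTop_zero.comp h1)
      simpa using tendsto_const_nhds.add this
    have h3 := (Real.continuousAt_log (x := 1) one_ne_zero).tendsto.comp h2
    simpa [Function.comp_def] using h3
  have hz : Tendsto (fun n : ℕ => φ n - psi y) atTop (nhds 0) :=
    tendsto_of_tendsto_of_tendsto_of_le_of_le' tendsto_const_nhds hb
      (Eventually.of_forall hlow) hhigh
  have := hz.add_const (psi y)
  simpa using this

lemma psi_hasDerivAt {y : ℝ} (hy : 0 < y) : HasDerivAt psi (sig 2 y) y := by
  refine hasDerivAt_of_tendstoLocallyUniformlyOn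
    (f := fun (n : ℕ) (u : ℝ) => Real.log (u + n) - ∑ j ∈ range n, (u + (j : ℝ))⁻¹)
    (f' := fun (n : ℕ) (u : ℝ) => (u + n)⁻¹ + ∑ j ∈ range n, (u + (j : ℝ)) ^ (-(2:ℕ) : ℤ))
    isOpen_Ioi ?_ ?_ (fun u hu => tendsto_phi (mem_Ioi.mp hu)) (mem_Ioi.mpr hy)
  · -- TLUO of derivatives to sig 2
    rw [tendstoLocallyUniformlyOn_iff_forall_isCompact isOpen_Ioi]
    intro K hK hKc
    have hP := (tendstoLocallyUniformlyOn_iff_forall_isCompact isOpen_Ioi).mp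
      (tluo' 1 (le_refl 2)) K hK hKc
    rcases K.eq_empty_or_nonempty with rfl | hne
    · simp [tendstoUniformlyOn_empty]
    obtain ⟨α, hαK, hmin⟩ := hKc.exists_isMinOn hne continuous_id.continuousOn
    have hα : (0:ℝ) < α := hK hαK
    have hE : TendstoUniformlyOn (fun (n : ℕ) (u : ℝ) => (u + n)⁻¹) 0 atTop K := by
      rw [Metric.tendstoUniformlyOn_iff]
      intro ε hε
      obtain ⟨N, hN⟩ := exists_nat_gt (ε⁻¹ - α)
      filter_upwards [eventually_ge_atTop N] with n hn u hu
      have huα : α ≤ u := hmin hu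
      have hun : (0:ℝ) < u + n := by
        have : (0:ℝ) ≤ n := Nat.cast_nonneg n
        linarith
      rw [Pi.zero_apply, dist_zero_left, Real.norm_eq_abs, abs_of_pos (inv_pos.mpr hun)]
      have h1 : ε⁻¹ < α + n := by
        have : (N:ℝ) ≤ n := Nat.cast_le.mpr hn
        linarith
      have h2 : ε⁻¹ < u + n := by linarith
      calc (u + n)⁻¹ < (ε⁻¹)⁻¹ := by
            apply inv_strictAnti₀ (by positivity) h2
        _ = ε := inv_inv ε
    have hsum := hE.add hP
    have hfin : (0 : ℝ → ℝ) + (fun y => 1 * sig 2 y) = sig 2 := by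
      funext u; simp
    rw [hfin] at hsum
    apply hsum.congr ?_ |>.congr_right ?_
    · filter_upwards with n
      intro u hu
      simp only [Pi.add_apply]
      congr 1
      apply Finset.sum_congr rfl
      intro j _
      rw [one_mul]
    · intro u hu; rfl
  · -- derivatives
    filter_upwards with n
    intro u hu
    have hu0 : (0:ℝ) < u := mem_Ioi.mp hu
    have h1 : HasDerivAt (fun z : ℝ => Real.log (z + n)) ((u + n)⁻¹) u := by
      have := (Real.hasDerivAt_log (show u + (n:ℝ) ≠ 0 by positivity)).comp_add_const u n
      exact this
    have h2 : HasDerivAt (fun z : ℝ => ∑ j ∈ range n, (z + (j : ℝ))⁻¹)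
        (∑ j ∈ range n, -((u + (j:ℝ)) ^ (-(2:ℕ):ℤ))) u := by
      refine HasDerivAt.fun_sum fun j _ => ?_
      have hj : u + (j : ℝ) ≠ 0 := by positivity
      have := (hasDerivAt_inv hj).comp_add_const u j
      convert this using 1
      rw [zpow_neg, zpow_natCast]
    have h3 := h1.sub h2
    have he : (∑ j ∈ range n, -((u + (j:ℝ)) ^ (-(2:ℕ):ℤ)))
        = -∑ j ∈ range n, (u + (j:ℝ)) ^ (-(2:ℕ):ℤ) := by
      rw [Finset.sum_neg_distrib]
    rw [he] at h3
    simpa [sub_neg_eq_add, Pi.sub_def] using h3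

/-- iterated derivatives of log ∘ Γ -/
noncomputable def Lam : ℕ → ℝ → ℝ
  | 0 => fun u => Real.log (Real.Gamma u)
  | 1 => psi
  | (m + 2) => fun u => (-1 : ℝ) ^ m * (m + 1).factorial * sig (m + 2) u

lemma Lam_hasDerivAt : ∀ (m : ℕ) {u : ℝ}, 0 < u → HasDerivAt (Lam m) (Lam (m + 1) u) u := by
  intro m u hu
  match m with
  | 0 => exact logGamma_hasDerivAt hu
  | 1 =>
    have := psi_hasDerivAt hu
    have h2 : Lam 2 u = sig 2 u := by simp [Lam]
    rw [show Lam 1 = psi from rfl, h2]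
    exact this
  | (p + 2) =>
    have h1 := (sig_hasDerivAt (show 2 ≤ p + 2 by omega) hu).const_mul
      ((-1 : ℝ) ^ p * (p + 1).factorial)
    have h2 : (-1:ℝ) ^ p * (p+1).factorial * (-((p+2:ℕ):ℝ) * sig (p+3) u)
        = (-1:ℝ) ^ (p+1) * (p+2).factorial * sig (p + 3) u := by
      rw [Nat.factorial_succ (p+1)]
      push_cast
      ring
    show HasDerivAt (fun u => (-1:ℝ)^p * (p+1).factorial * sig (p+2) u)
      ((-1:ℝ)^(p+1) * (p+2).factorial * sig (p+3) u) u
    rw [← h2]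
    convert h1 using 2

/-- A chain of functions, each the derivative of the previous, on an open set -/
def Chain (G : ℕ → ℝ → ℝ) (s : Set ℝ) : Prop :=
  ∀ m, ∀ y ∈ s, HasDerivAt (G m) (G (m + 1) y) y

lemma Chain.iteratedDeriv_eq {G : ℕ → ℝ → ℝ} {s : Set ℝ} (hs : IsOpen s) (hG : Chain G s)
    (m : ℕ) : ∀ y ∈ s, iteratedDeriv m (G 0) y = G m y := by
  induction m with
  | zero => intro y _; simp
  | succ m ih =>
    intro y hy
    rw [iteratedDeriv_succ]
    have heq : iteratedDeriv m (G 0) =ᶠ[nhds y] G m := by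
      filter_upwards [hs.mem_nhds hy] using ih
    rw [heq.deriv_eq]
    exact (hG m y hy).deriv

lemma chain_mul {G H : ℕ → ℝ → ℝ} {s : Set ℝ} (hG : Chain G s) (hH : Chain H s) :
    Chain (fun m y => ∑ j ∈ range (m + 1), (m.choose j : ℝ) * (G j y * H (m - j) y)) s := by
  intro m y hy
  have h1 : HasDerivAt (fun z => ∑ j ∈ range (m + 1), (m.choose j : ℝ) * (G j z * H (m - j) z))
      (∑ j ∈ range (m + 1), (m.choose j : ℝ) *
        (G (j + 1) y * H (m - j) y + G j y * H (m - j + 1) y)) y := by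
    refine HasDerivAt.fun_sum fun j hj => ?_
    exact (((hG j y hy).mul (hH (m - j) y hy))).const_mul _
  convert h1 using 1
  -- sum identity
  have hsplit : ∀ j ∈ range (m + 1), (m.choose j : ℝ) *
        (G (j + 1) y * H (m - j) y + G j y * H (m - j + 1) y)
      = (m.choose j : ℝ) * (G (j+1) y * H (m - j) y)
        + (m.choose j : ℝ) * (G j y * H (m + 1 - j) y) := by
    intro j hj
    have : m - j + 1 = m + 1 - j := by
      have := mem_range.mp hj; omega
    rw [this]; ring
  rw [Finset.sum_congr rfl hsplit, Finset.sum_add_distrib]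
  show ∑ j ∈ range (m + 2), (((m+1).choose j : ℕ) : ℝ) * (G j y * H (m + 1 - j) y) = _
  -- LHS : ∑_{j ∈ range (m+2)} C(m+1,j) G j H (m+1-j)
  rw [Finset.sum_range_succ' (fun j => ((m+1).choose j : ℝ) * (G j y * H (m + 1 - j) y))]
  have hL : ∀ j ∈ range (m + 1), (((m+1).choose (j+1) : ℕ) : ℝ) * (G (j+1) y * H (m + 1 - (j+1)) y)
      = (m.choose j : ℝ) * (G (j+1) y * H (m - j) y)
        + (m.choose (j+1) : ℝ) * (G (j+1) y * H (m - j) y) := by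
    intro j hj
    have h1 : (m+1).choose (j+1) = m.choose j + m.choose (j+1) := Nat.choose_succ_succ m j
    have h2 : m + 1 - (j + 1) = m - j := by omega
    rw [h1, h2]
    push_cast
    ring
  rw [Finset.sum_congr rfl hL, Finset.sum_add_distrib]
  have hB : ∑ j ∈ range (m + 1), (m.choose (j+1) : ℝ) * (G (j+1) y * H (m - j) y)
      + ((m+1).choose 0 : ℝ) * (G 0 y * H (m + 1 - 0) y)
      = ∑ j ∈ range (m + 1), (m.choose j : ℝ) * (G j y * H (m + 1 - j) y) := by
    rw [Finset.sum_range_succ (fun j => (m.choose (j+1) : ℝ) * (G (j+1) y * H (m - j) y)) m]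
    rw [Nat.choose_succ_self, Finset.sum_range_succ' (fun j => (m.choose j : ℝ) * (G j y * H (m + 1 - j) y))]
    have : ∀ j ∈ range m, (m.choose (j+1) : ℝ) * (G (j+1) y * H (m - j) y)
        = (m.choose (j+1) : ℝ) * (G (j+1) y * H (m + 1 - (j+1)) y) := by
      intro j hj
      have h : m - j = m + 1 - (j + 1) := by omega
      rw [h]
    rw [Finset.sum_congr rfl this]
    simp
  linarith [hB]

lemma abel_aux (w c : ℕ → ℝ) :
    ∀ n : ℕ, (∀ i j, 1 ≤ i → i ≤ j → j ≤ n → w j ≤ w i) →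
    (∀ k, 1 ≤ k → k ≤ n → 0 ≤ ∑ i ∈ Icc 1 k, c i) →
    w n * ∑ i ∈ Icc 1 n, c i ≤ ∑ i ∈ Icc 1 n, w i * c i := by
  intro n
  induction n with
  | zero => intro _ _; simp
  | succ n ih =>
    intro hw hc
    have ih' := ih (fun i j h1 h2 h3 => hw i j h1 h2 (by omega))
      (fun k h1 h2 => hc k h1 (by omega))
    rw [Finset.sum_Icc_succ_top (by omega) c, Finset.sum_Icc_succ_top (by omega) (fun i => w i * c i)]
    have hkey : w (n+1) * ∑ i ∈ Icc 1 n, c i ≤ w n * ∑ i ∈ Icc 1 n, c i := by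
      rcases Nat.eq_zero_or_pos n with rfl | hn
      · simp
      · have h1 : w (n+1) ≤ w n := hw n (n+1) hn (by omega) (le_refl _)
        have h2 : 0 ≤ ∑ i ∈ Icc 1 n, c i := hc n hn (by omega)
        nlinarith
    nlinarith [ih']

lemma abel_nonneg (w c : ℕ → ℝ) (n : ℕ)
    (hw0 : ∀ i, 1 ≤ i → i ≤ n → 0 ≤ w i)
    (hw : ∀ i j, 1 ≤ i → i ≤ j → j ≤ n → w j ≤ w i)
    (hc : ∀ k, 1 ≤ k → k ≤ n → 0 ≤ ∑ i ∈ Icc 1 k, c i) :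
    0 ≤ ∑ i ∈ Icc 1 n, w i * c i := by
  rcases Nat.eq_zero_or_pos n with rfl | hn
  · simp
  calc (0:ℝ) ≤ w n * ∑ i ∈ Icc 1 n, c i :=
        mul_nonneg (hw0 n hn (le_refl _)) (hc n hn (le_refl _))
    _ ≤ _ := abel_aux w c n hw hc

/-- tangent line inequality for x ↦ x^(-m) on (0,∞) -/
lemma tangent (m : ℕ) {p q : ℝ} (hp : 0 < p) (hq : 0 < q) :
    p ^ (-(m:ℤ)) - q ^ (-(m:ℤ)) ≤ (m:ℝ) * p ^ (-(m:ℤ)-1) * (q - p) := by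
  have hconv : ConvexOn ℝ (Ioi (0:ℝ)) (fun x : ℝ => x ^ (-(m:ℤ))) := convexOn_zpow _
  have hder : ∀ r : ℝ, 0 < r →
      HasDerivAt (fun x : ℝ => x ^ (-(m:ℤ))) (((-(m:ℤ)) : ℝ) * r ^ (-(m:ℤ)-1)) r := by
    intro r hr
    exact_mod_cast hasDerivAt_zpow (-(m:ℤ)) r (Or.inl hr.ne')
  have hdp := hder p hp
  rcases lt_trichotomy p q with h | h | h
  · have hs := hconv.deriv_le_slope (mem_Ioi.mpr hp) (mem_Ioi.mpr hq) h hdp.differentiableAt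
    rw [hdp.deriv, slope_def_field] at hs
    have hqp : 0 < q - p := by linarith
    have h2 := mul_le_mul_of_nonneg_right hs hqp.le
    rw [div_mul_cancel₀ _ hqp.ne'] at h2
    push_cast at h2 ⊢
    nlinarith [h2]
  · rw [h]; simp
  · have hs := hconv.slope_le_deriv (mem_Ioi.mpr hq) (mem_Ioi.mpr hp) h hdp.differentiableAt
    rw [hdp.deriv, slope_def_field] at hs
    have hpq : 0 < p - q := by linarith
    have h2 := mul_le_mul_of_nonneg_right hs hpq.le
    rw [div_mul_cancel₀ _ hpq.ne'] at h2
    push_cast at h2 ⊢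
    nlinarith [h2]

/-- finite majorization inequality -/
lemma majorize (n : ℕ) (a b : ℕ → ℝ)
    (ha0 : ∀ i, 1 ≤ i → i ≤ n → 0 ≤ a i)
    (hamono : ∀ i j, 1 ≤ i → i ≤ j → j ≤ n → a i ≤ a j)
    (hsum : ∀ k, 1 ≤ k → k ≤ n → ∑ i ∈ Icc 1 k, b i ≤ ∑ i ∈ Icc 1 k, a i)
    (m : ℕ) {c : ℝ} (hc : 0 < c) (hb0 : ∀ i, 1 ≤ i → i ≤ n → 0 ≤ b i) :
    ∑ i ∈ Icc 1 n, (c + a i) ^ (-(m:ℤ)) ≤ ∑ i ∈ Icc 1 n, (c + b i) ^ (-(m:ℤ)) := by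
  rw [← sub_nonpos, ← Finset.sum_sub_distrib]
  have key : ∀ i ∈ Finset.Icc 1 n,
      (c + a i) ^ (-(m:ℤ)) - (c + b i) ^ (-(m:ℤ))
        ≤ (m:ℝ) * ((c + a i) ^ (-(m:ℤ)-1) * (b i - a i)) := by
    intro i hi
    obtain ⟨h1, h2⟩ := Finset.mem_Icc.mp hi
    have hpa : 0 < c + a i := by have := ha0 i h1 h2; linarith
    have hpb : 0 < c + b i := by have := hb0 i h1 h2; linarith
    have := tangent m hpa hpb
    calc (c + a i) ^ (-(m:ℤ)) - (c + b i) ^ (-(m:ℤ))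
        ≤ (m:ℝ) * (c + a i) ^ (-(m:ℤ)-1) * ((c + b i) - (c + a i)) := this
      _ = (m:ℝ) * ((c + a i) ^ (-(m:ℤ)-1) * (b i - a i)) := by ring_nf
  have h1 := Finset.sum_le_sum key
  have h2 : 0 ≤ ∑ i ∈ Icc 1 n, (c + a i) ^ (-(m:ℤ)-1) * (a i - b i) := by
    apply abel_nonneg (fun i => (c + a i) ^ (-(m:ℤ)-1)) (fun i => a i - b i) n
    · intro i hi1 hi2
      exact (zpos (by have := ha0 i hi1 hi2; linarith)).le
    · intro i j hi hij hj
      have hpi : 0 < c + a i := by have := ha0 i hi (le_trans hij hj); linarith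
      exact zanti (by omega) hpi (by have := hamono i j hi hij hj; linarith)
    · intro k hk1 hk2
      rw [Finset.sum_sub_distrib, sub_nonneg]
      exact hsum k hk1 hk2
  have h3 : ∑ i ∈ Icc 1 n, (m:ℝ) * ((c + a i) ^ (-(m:ℤ)-1) * (b i - a i))
      = -(m:ℝ) * ∑ i ∈ Icc 1 n, (c + a i) ^ (-(m:ℤ)-1) * (a i - b i) := by
    rw [Finset.mul_sum]
    apply Finset.sum_congr rfl
    intro i _; ring
  rw [h3] at h1
  have : -(m:ℝ) * ∑ i ∈ Icc 1 n, (c + a i) ^ (-(m:ℤ)-1) * (a i - b i) ≤ 0 := by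
    have hm : (0:ℝ) ≤ m := Nat.cast_nonneg m
    nlinarith [h2]
  linarith

/-- the key sign inequality for sums of sig -/
lemma sig_sum_le (n : ℕ) (a b : ℕ → ℝ)
    (ha0 : ∀ i, 1 ≤ i → i ≤ n → 0 < a i) (hb0 : ∀ i, 1 ≤ i → i ≤ n → 0 < b i)
    (hamono : ∀ i j, 1 ≤ i → i ≤ j → j ≤ n → a i ≤ a j)
    (hsum : ∀ k, 1 ≤ k → k ≤ n → ∑ i ∈ Icc 1 k, b i ≤ ∑ i ∈ Icc 1 k, a i)
    {m : ℕ} (hm : 2 ≤ m) {t : ℝ} (ht : 0 < t) :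
    ∑ i ∈ Icc 1 n, sig m (t + a i) ≤ ∑ i ∈ Icc 1 n, sig m (t + b i) := by
  have hsa : ∀ i ∈ Finset.Icc 1 n, Summable fun j : ℕ => ((t + a i) + (j:ℝ)) ^ (-(m:ℤ)) := by
    intro i hi
    obtain ⟨h1, h2⟩ := Finset.mem_Icc.mp hi
    exact summable_aux hm (by have := ha0 i h1 h2; linarith)
  have hsb : ∀ i ∈ Finset.Icc 1 n, Summable fun j : ℕ => ((t + b i) + (j:ℝ)) ^ (-(m:ℤ)) := by
    intro i hi
    obtain ⟨h1, h2⟩ := Finset.mem_Icc.mp hi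
    exact summable_aux hm (by have := hb0 i h1 h2; linarith)
  have hA : ∑ i ∈ Icc 1 n, sig m (t + a i)
      = ∑' j : ℕ, ∑ i ∈ Icc 1 n, ((t + a i) + (j:ℝ)) ^ (-(m:ℤ)) := by
    rw [Summable.tsum_finsetSum hsa]; rfl
  have hB : ∑ i ∈ Icc 1 n, sig m (t + b i)
      = ∑' j : ℕ, ∑ i ∈ Icc 1 n, ((t + b i) + (j:ℝ)) ^ (-(m:ℤ)) := by
    rw [Summable.tsum_finsetSum hsb]; rfl
  rw [hA, hB]
  refine Summable.tsum_le_tsum (fun j => ?_)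
    ((hasSum_sum fun i hi => (hsa i hi).hasSum).summable)
    ((hasSum_sum fun i hi => (hsb i hi).hasSum).summable)
  have := majorize n a b (fun i h1 h2 => (ha0 i h1 h2).le) hamono hsum m
    (show (0:ℝ) < t + j by positivity) (fun i h1 h2 => (hb0 i h1 h2).le)
  calc ∑ i ∈ Icc 1 n, ((t + a i) + (j:ℝ)) ^ (-(m:ℤ))
      = ∑ i ∈ Icc 1 n, ((t + (j:ℝ)) + a i) ^ (-(m:ℤ)) := by
        apply Finset.sum_congr rfl; intro i _; ring_nf
    _ ≤ ∑ i ∈ Icc 1 n, ((t + (j:ℝ)) + b i) ^ (-(m:ℤ)) := this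
    _ = ∑ i ∈ Icc 1 n, ((t + b i) + (j:ℝ)) ^ (-(m:ℤ)) := by
        apply Finset.sum_congr rfl; intro i _; ring_nf

lemma fact_key {k j : ℕ} (hj : j < k) :
    (k.choose (j+1)) * (j+1) * (k - (j+1)).factorial = k.choose j * (k - j).factorial := by
  apply Nat.eq_of_mul_eq_mul_right (Nat.factorial_pos j)
  have h1 : k.choose (j+1) * (j+1).factorial * (k - (j+1)).factorial = k.factorial :=
    Nat.choose_mul_factorial_mul_factorial (by omega)
  have h2 : k.choose j * j.factorial * (k - j).factorial = k.factorial :=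
    Nat.choose_mul_factorial_mul_factorial (by omega)
  calc k.choose (j+1) * (j+1) * (k - (j+1)).factorial * j.factorial
      = k.choose (j+1) * ((j+1) * j.factorial) * (k - (j+1)).factorial := by ring
    _ = k.choose (j+1) * (j+1).factorial * (k - (j+1)).factorial := by
        rw [Nat.factorial_succ]
    _ = k.factorial := h1
    _ = k.choose j * j.factorial * (k - j).factorial := h2.symm
    _ = k.choose j * (k - j).factorial * j.factorial := by ring

lemma telescope (k : ℕ) (Φ : ℕ → ℝ) (y : ℝ) :
    ∑ j ∈ range (k+1), ((k.choose j : ℝ) * (k-j).factorial * (-1)^j)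
        * (Φ (j+1) * y^j + Φ j * ((j:ℝ) * y^(j-1)))
      = (-1)^k * Φ (k+1) * y^k := by
  have hsplit : ∀ j ∈ range (k+1),
      ((k.choose j : ℝ) * (k-j).factorial * (-1)^j) * (Φ (j+1) * y^j + Φ j * ((j:ℝ) * y^(j-1)))
      = ((k.choose j : ℝ) * (k-j).factorial * (-1)^j) * (Φ (j+1) * y^j)
        + ((k.choose j : ℝ) * (k-j).factorial * (-1)^j) * (Φ j * ((j:ℝ) * y^(j-1))) := by
    intro j _; ring
  rw [Finset.sum_congr rfl hsplit, Finset.sum_add_distrib]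
  rw [Finset.sum_range_succ (fun j => ((k.choose j : ℝ) * (k-j).factorial * (-1)^j) * (Φ (j+1) * y^j)) k]
  rw [Finset.sum_range_succ' (fun j => ((k.choose j : ℝ) * (k-j).factorial * (-1)^j) * (Φ j * ((j:ℝ) * y^(j-1)))) k]
  have hzero : ((k.choose 0 : ℝ) * (k-0).factorial * (-1)^0) * (Φ 0 * ((0:ℕ) * y^(0-1))) = 0 := by
    simp
  rw [hzero, add_zero]
  have hcancel : ∀ j ∈ range k,
      ((k.choose j : ℝ) * (k-j).factorial * (-1)^j) * (Φ (j+1) * y^j)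
      + ((k.choose (j+1) : ℝ) * (k-(j+1)).factorial * (-1)^(j+1)) * (Φ (j+1) * (((j+1):ℕ) * y^((j+1)-1)))
      = 0 := by
    intro j hj
    have hk := fact_key (mem_range.mp hj)
    have hkr : ((k.choose (j+1) * (j+1) * (k - (j+1)).factorial : ℕ) : ℝ)
        = ((k.choose j * (k - j).factorial : ℕ) : ℝ) := by exact_mod_cast hk
    push_cast at hkr
    have hy : y^((j+1)-1) = y^j := by norm_num
    rw [hy]
    push_cast
    linear_combination (-((-1:ℝ)^j * Φ (j+1) * y^j)) * hkr
  have : ∑ j ∈ range k,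
      ((k.choose (j+1) : ℝ) * (k-(j+1)).factorial * (-1)^(j+1)) * (Φ (j+1) * (((j+1):ℕ) * y^((j+1)-1)))
      = ∑ j ∈ range k, -(((k.choose j : ℝ) * (k-j).factorial * (-1)^j) * (Φ (j+1) * y^j)) := by
    apply Finset.sum_congr rfl
    intro j hj
    have := hcancel j hj
    linarith
  rw [this]
  simp [Nat.choose_self, Nat.sub_self]
  ring

end ChiLCM

open Finset

theorem chi_logarithmically_completely_monotonic
    (n : ℕ) (a b : ℕ → ℝ) (ρ : ℝ) (hρ : 0 < ρ)
    (ha0 : ∀ i ∈ Icc 1 n, 0 ≤ a i) (hb0 : ∀ i ∈ Icc 1 n, 0 ≤ b i)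
    (hamono : ∀ i j, 1 ≤ i → i ≤ j → j ≤ n → a i ≤ a j)
    (hbmono : ∀ i j, 1 ≤ i → i ≤ j → j ≤ n → b i ≤ b j)
    (hρprod : 1 ≤ ρ * ∏ i ∈ Icc 1 n, Real.Gamma (a i) / Real.Gamma (b i))
    (hsum : ∀ k, 1 ≤ k → k ≤ n → ∑ i ∈ Icc 1 k, b i ≤ ∑ i ∈ Icc 1 k, a i) :
    ∀ (k : ℕ), 1 ≤ k → ∀ x : ℝ, 0 < x →
      0 ≤ (-1 : ℝ) ^ k *
        iteratedDeriv k (fun y : ℝ =>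
          Real.log ((ρ * ∏ i ∈ Icc 1 n, Real.Gamma (y + a i) / Real.Gamma (y + b i))
            ^ (1 / y))) x := by
  classical
  intro k hk x hx
  -- nondegeneracy
  have hfac : ∀ i ∈ Icc 1 n, Real.Gamma (a i) / Real.Gamma (b i) ≠ 0 := by
    intro i hi hzero
    have h0 : (∏ i ∈ Icc 1 n, Real.Gamma (a i) / Real.Gamma (b i)) = 0 :=
      Finset.prod_eq_zero hi hzero
    rw [h0, mul_zero] at hρprod; linarith
  have hapos : ∀ i ∈ Icc 1 n, 0 < a i := by
    intro i hi
    have hne := (div_ne_zero_iff.mp (hfac i hi)).1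
    rcases eq_or_lt_of_le (ha0 i hi) with h | h
    · exact absurd (by rw [← h, Real.Gamma_zero]) hne
    · exact h
  have hbpos : ∀ i ∈ Icc 1 n, 0 < b i := by
    intro i hi
    have hne := (div_ne_zero_iff.mp (hfac i hi)).2
    rcases eq_or_lt_of_le (hb0 i hi) with h | h
    · exact absurd (by rw [← h, Real.Gamma_zero]) hne
    · exact h
  -- the margin δ
  set T : Finset ℝ := insert (1:ℝ) ((Icc 1 n).image fun i => min (a i) (b i)) with hT
  have hTne : T.Nonempty := ⟨1, Finset.mem_insert_self _ _⟩
  set δ : ℝ := T.min' hTne with hδ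
  have hδpos : 0 < δ := by
    rw [hδ]
    apply (Finset.lt_min'_iff T hTne).mpr
    intro z hz
    rcases Finset.mem_insert.mp hz with rfl | hz2
    · norm_num
    · obtain ⟨i, hi, rfl⟩ := Finset.mem_image.mp hz2
      exact lt_min (hapos i hi) (hbpos i hi)
  have hδa : ∀ i ∈ Icc 1 n, δ ≤ a i := fun i hi =>
    le_trans (Finset.min'_le T _ (Finset.mem_insert_of_mem (Finset.mem_image_of_mem _ hi)))
      (min_le_left _ _)
  have hδb : ∀ i ∈ Icc 1 n, δ ≤ b i := fun i hi =>
    le_trans (Finset.min'_le T _ (Finset.mem_insert_of_mem (Finset.mem_image_of_mem _ hi)))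
      (min_le_right _ _)
  -- the chains
  set FF : ℕ → ℝ → ℝ := fun m y =>
    (if m = 0 then Real.log ρ else 0)
      + ∑ i ∈ Icc 1 n, (ChiLCM.Lam m (y + a i) - ChiLCM.Lam m (y + b i)) with hFFdef
  have hFF : ChiLCM.Chain FF (Set.Ioi (-δ)) := by
    intro m y hy
    have hy' : -δ < y := Set.mem_Ioi.mp hy
    have hsum' : HasDerivAt
        (fun z => ∑ i ∈ Icc 1 n, (ChiLCM.Lam m (z + a i) - ChiLCM.Lam m (z + b i)))
        (∑ i ∈ Icc 1 n, (ChiLCM.Lam (m+1) (y + a i) - ChiLCM.Lam (m+1) (y + b i))) y := by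
      refine HasDerivAt.fun_sum fun i hi => ?_
      have hpa : 0 < y + a i := by have := hδa i hi; linarith
      have hpb : 0 < y + b i := by have := hδb i hi; linarith
      exact ((ChiLCM.Lam_hasDerivAt m hpa).comp_add_const y (a i)).sub
        ((ChiLCM.Lam_hasDerivAt m hpb).comp_add_const y (b i))
    have h2 := hsum'.const_add (if m = 0 then Real.log ρ else 0)
    have h3 : FF (m+1) y
        = ∑ i ∈ Icc 1 n, (ChiLCM.Lam (m+1) (y + a i) - ChiLCM.Lam (m+1) (y + b i)) := by
      simp only [hFFdef]; simp
    rw [h3]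
    exact h2
  set HH : ℕ → ℝ → ℝ := fun m y => (-1:ℝ)^m * m.factorial * y ^ (-(m:ℤ)-1) with hHHdef
  have hHH : ChiLCM.Chain HH (Set.Ioi (0:ℝ)) := by
    intro m y hy
    have hy' : (0:ℝ) < y := Set.mem_Ioi.mp hy
    have h1 := (hasDerivAt_zpow (-(m:ℤ)-1) y (Or.inl hy'.ne')).const_mul
      ((-1:ℝ)^m * m.factorial)
    have h2 : (-1:ℝ)^m * (m.factorial : ℝ) * (((-(m:ℤ)-1 : ℤ) : ℝ) * y ^ (-(m:ℤ)-1-1))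
        = HH (m+1) y := by
      simp only [hHHdef]
      rw [Nat.factorial_succ]
      have he : (-(m:ℤ)-1-1 : ℤ) = -((m+1:ℕ):ℤ)-1 := by push_cast; ring
      rw [he]
      push_cast
      ring
    rw [← h2]
    exact h1
  have hsub : Set.Ioi (0:ℝ) ⊆ Set.Ioi (-δ) := fun z hz => by
    have : (0:ℝ) < z := Set.mem_Ioi.mp hz
    exact Set.mem_Ioi.mpr (by linarith)
  have hFF0 : ChiLCM.Chain FF (Set.Ioi (0:ℝ)) := fun m y hy => hFF m y (hsub hy)
  have hP := ChiLCM.chain_mul hFF0 hHH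
  -- step 1 : replace the function by FF 0 * HH 0
  have heq : (fun y : ℝ =>
        Real.log ((ρ * ∏ i ∈ Icc 1 n, Real.Gamma (y + a i) / Real.Gamma (y + b i)) ^ (1 / y)))
      =ᶠ[nhds x] (fun y => ∑ j ∈ range (0+1), ((0:ℕ).choose j : ℝ) * (FF j y * HH (0 - j) y)) := by
    filter_upwards [isOpen_Ioi.mem_nhds (Set.mem_Ioi.mpr hx)] with y hy
    have hy' : (0:ℝ) < y := Set.mem_Ioi.mp hy
    have hprodpos : 0 < ∏ i ∈ Icc 1 n, Real.Gamma (y + a i) / Real.Gamma (y + b i) := by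
      apply Finset.prod_pos
      intro i hi
      have hpa : 0 < y + a i := by have := (hapos i hi); linarith
      have hpb : 0 < y + b i := by have := (hbpos i hi); linarith
      exact div_pos (Real.Gamma_pos_of_pos hpa) (Real.Gamma_pos_of_pos hpb)
    rw [Real.log_rpow (by positivity)]
    rw [Real.log_mul hρ.ne' hprodpos.ne']
    rw [Real.log_prod (fun i hi => ?side)]
    case side =>
      have hpa : 0 < y + a i := by have := (hapos i hi); linarith
      have hpb : 0 < y + b i := by have := (hbpos i hi); linarith
      exact (div_pos (Real.Gamma_pos_of_pos hpa) (Real.Gamma_pos_of_pos hpb)).ne'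
    have hdiv : ∀ i ∈ Icc 1 n, Real.log (Real.Gamma (y + a i) / Real.Gamma (y + b i))
        = ChiLCM.Lam 0 (y + a i) - ChiLCM.Lam 0 (y + b i) := by
      intro i hi
      have hpa : 0 < y + a i := by have := (hapos i hi); linarith
      have hpb : 0 < y + b i := by have := (hbpos i hi); linarith
      rw [Real.log_div (Real.Gamma_pos_of_pos hpa).ne' (Real.Gamma_pos_of_pos hpb).ne']
      rfl
    rw [Finset.sum_congr rfl hdiv]
    rw [Finset.sum_range_one]
    have hHH0 : HH 0 y = y⁻¹ := by
      simp only [hHHdef]; norm_num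
    have hFF0y : FF 0 y = Real.log ρ + ∑ i ∈ Icc 1 n,
        (ChiLCM.Lam 0 (y + a i) - ChiLCM.Lam 0 (y + b i)) := by
      simp only [hFFdef, reduceIte]
    rw [hHH0, hFF0y]
    simp [one_div]
    ring
  rw [Filter.EventuallyEq.iteratedDeriv_eq k heq]
  have hiter := ChiLCM.Chain.iteratedDeriv_eq isOpen_Ioi hP k x (Set.mem_Ioi.mpr hx)
  rw [hiter]
  -- now pure computation with U
  set U : ℝ → ℝ := fun t => ∑ j ∈ range (k+1),
    ((k.choose j : ℝ) * (k-j).factorial * (-1)^j) * (FF j t * t^j) with hUdef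
  -- algebra : (-1)^k * P k x = x^(-(k:ℤ)-1) * U x
  have halg : (-1:ℝ)^k * (∑ j ∈ range (k + 1), (k.choose j : ℝ) * (FF j x * HH (k - j) x))
      = x ^ (-(k:ℤ)-1) * U x := by
    simp only [hUdef]; rw [Finset.mul_sum, Finset.mul_sum]
    apply Finset.sum_congr rfl
    intro j hj
    have hjk : j ≤ k := by have := mem_range.mp hj; omega
    have hsign : (-1:ℝ)^k * (-1:ℝ)^(k-j) = (-1:ℝ)^j := by
      rw [← pow_add]
      have h2 : k + (k - j) = 2*(k-j) + j := by omega
      rw [h2, pow_add, pow_mul, neg_one_sq, one_pow, one_mul]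
    have hzp : x ^ (-((k-j:ℕ):ℤ) - 1) = x ^ (j:ℕ) * x ^ (-(k:ℤ)-1) := by
      rw [← zpow_natCast x j, ← zpow_add₀ hx.ne']
      congr 1
      have : ((k - j : ℕ):ℤ) = (k:ℤ) - (j:ℤ) := by
        push_cast [Nat.cast_sub hjk]; ring
      rw [this]; ring
    simp only [hHHdef]
    rw [hzp]
    have : (-1:ℝ)^k * ((k.choose j:ℝ) * (FF j x * ((-1:ℝ)^(k-j) * ((k-j).factorial : ℝ)
          * (x ^ (j:ℕ) * x ^ (-(k:ℤ)-1)))))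
        = ((-1:ℝ)^k * (-1:ℝ)^(k-j)) * ((k.choose j:ℝ) * ((k-j).factorial : ℝ)
          * (FF j x * x ^ (j:ℕ) * x ^ (-(k:ℤ)-1))) := by ring
    rw [this, hsign]
    ring
  rw [halg]
  -- derivative of U
  have hU : ∀ t ∈ Set.Ioi (-δ), HasDerivAt U ((-1:ℝ)^k * FF (k+1) t * t^k) t := by
    intro t ht
    have h1 : HasDerivAt U (∑ j ∈ range (k+1),
        ((k.choose j : ℝ) * (k-j).factorial * (-1)^j)
          * (FF (j+1) t * t^j + FF j t * ((j:ℝ) * t^(j-1)))) t := by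
      simp only [hUdef]
      refine HasDerivAt.fun_sum fun j _ => ?_
      exact ((hFF j t ht).mul (hasDerivAt_pow j t)).const_mul _
    have h2 := ChiLCM.telescope k (fun m => FF m t) t
    rw [h2] at h1
    exact h1
  -- monotonicity of U on [0, x]
  have hmem : ∀ t ∈ Set.Icc (0:ℝ) x, t ∈ Set.Ioi (-δ) := by
    intro t ht
    have := ht.1
    exact Set.mem_Ioi.mpr (by linarith)
  have hmono : MonotoneOn U (Set.Icc 0 x) := by
    apply monotoneOn_of_deriv_nonneg (convex_Icc 0 x)
    · intro t ht
      exact (hU t (hmem t ht)).continuousAt.continuousWithinAt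
    · intro t ht
      rw [interior_Icc] at ht
      exact (hU t (hmem t (Set.mem_Icc_of_Ioo ht))).differentiableAt.differentiableWithinAt
    · intro t ht
      rw [interior_Icc] at ht
      obtain ⟨ht0, htx⟩ := ht
      rw [(hU t (hmem t (Set.mem_Icc_of_Ioo ⟨ht0, htx⟩))).deriv]
      -- Alzer sign
      have halzer : 0 ≤ (-1:ℝ)^k * FF (k+1) t := by
        obtain ⟨p, rfl⟩ : ∃ p, k = p + 1 := ⟨k - 1, by omega⟩
        have hFFval : FF (p+2) t = (-1:ℝ)^p * (p+1).factorial
            * ∑ i ∈ Icc 1 n, (ChiLCM.sig (p+2) (t + a i) - ChiLCM.sig (p+2) (t + b i)) := by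
          simp only [hFFdef]
          simp only [ChiLCM.Lam]
          rw [Finset.mul_sum]
          rw [if_neg (by omega)]
          rw [zero_add]
          apply Finset.sum_congr rfl
          intro i _
          ring
        rw [hFFval]
        have hle := ChiLCM.sig_sum_le n a b
          (fun i h1 h2 => hapos i (Finset.mem_Icc.mpr ⟨h1, h2⟩))
          (fun i h1 h2 => hbpos i (Finset.mem_Icc.mpr ⟨h1, h2⟩))
          (fun i j h1 h2 h3 => hamono i j h1 h2 h3)
          hsum (show 2 ≤ p + 2 by omega) ht0
        have hdiff : ∑ i ∈ Icc 1 n, (ChiLCM.sig (p+2) (t + a i) - ChiLCM.sig (p+2) (t + b i))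
            ≤ 0 := by
          rw [Finset.sum_sub_distrib]
          linarith
        have hsign2 : (-1:ℝ)^(p+1) * ((-1:ℝ)^p * ((p+1).factorial : ℝ)) 
            = -((p+1).factorial : ℝ) := by
          rw [pow_succ]
          have : (-1:ℝ)^p * (-1:ℝ)^p = 1 := by
            rw [← pow_add]
            rw [← two_mul, pow_mul, neg_one_sq, one_pow]
          nlinarith [this]
        calc (0:ℝ) ≤ -((p+1).factorial : ℝ)
              * ∑ i ∈ Icc 1 n, (ChiLCM.sig (p+2) (t + a i) - ChiLCM.sig (p+2) (t + b i)) := by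
              have hf : (0:ℝ) ≤ ((p+1).factorial : ℝ) := Nat.cast_nonneg _
              nlinarith [hdiff, hf]
          _ = (-1:ℝ)^(p+1) * ((-1:ℝ)^p * ((p+1).factorial : ℝ)
              * ∑ i ∈ Icc 1 n, (ChiLCM.sig (p+2) (t + a i) - ChiLCM.sig (p+2) (t + b i))) := by
              rw [← mul_assoc, hsign2]
      have htk : (0:ℝ) ≤ t^k := by positivity
      nlinarith [halzer, htk]
  -- value at 0 and conclusion
  have hU0 : U 0 = (k.factorial : ℝ) * FF 0 0 := by
    simp only [hUdef]
    rw [Finset.sum_eq_single 0]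
    · simp
    · intro j hj hjne
      rw [zero_pow hjne]
      ring
    · intro h
      exact absurd (mem_range.mpr (by omega)) h
  have hFF00 : 0 ≤ FF 0 0 := by
    have hlog : FF 0 0 = Real.log (ρ * ∏ i ∈ Icc 1 n, Real.Gamma (a i) / Real.Gamma (b i)) := by
      simp only [hFFdef, reduceIte]
      have hprodne : (∏ i ∈ Icc 1 n, Real.Gamma (a i) / Real.Gamma (b i)) ≠ 0 :=
        Finset.prod_ne_zero_iff.mpr hfac
      rw [Real.log_mul hρ.ne' hprodne, Real.log_prod hfac]
      congr 1
      apply Finset.sum_congr rfl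
      intro i hi
      have hpa := hapos i hi
      have hpb := hbpos i hi
      rw [zero_add, zero_add]
      rw [Real.log_div (Real.Gamma_pos_of_pos hpa).ne' (Real.Gamma_pos_of_pos hpb).ne']
      rfl
    rw [hlog]
    exact Real.log_nonneg hρprod
  have hUx : 0 ≤ U x := by
    have h1 : U 0 ≤ U x := hmono (Set.mem_Icc.mpr ⟨le_refl 0, hx.le⟩)
      (Set.mem_Icc.mpr ⟨hx.le, le_refl x⟩) hx.le
    have h2 : 0 ≤ U 0 := by
      rw [hU0]
      exact mul_nonneg (Nat.cast_nonneg _) hFF00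
    linarith
  exact mul_nonneg (ChiLCM.zpos hx).le hUx
end
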